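/- arXiv:1404.2355 — 3 statements merged into one kernel-verified Lean document; each statement's English description precedes it below -/
import Mathlib

section
/- For any n×p real matrices A and B, the ESDs of AA' and BB' satisfy L⁴(F^{AA'}, F^{BB'}) ≤ 2 n^{-2} (‖A‖₂² + ‖B‖₂²) ‖A − B‖₂², where ‖·‖₂ is the Frobenius norm ‖M‖₂ = tr^{1/2}(M'M). -/
open MeasureTheory ProbabilityTheory Filter Matrix
open scoped NNReal ENNReal

noncomputable section

open scoped Classical in
/-- Empirical spectral distribution `F^S(x) = n⁻¹ #{k : λ_k ≤ x}` of a symmetric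
square matrix (junk value `0` if the matrix is not symmetric). -/
def esd {n : ℕ} (S : Matrix (Fin n) (Fin n) ℝ) (x : ℝ) : ℝ :=
  if hS : S.IsHermitian then
    ((Finset.univ.filter fun k => hS.eigenvalues k ≤ x).card : ℝ) / n
  else 0

/-- Euclidean (Frobenius) norm `‖M‖₂ = tr(MᵀM)^{1/2}` of a real matrix. -/
def frobNorm {n p : ℕ} (M : Matrix (Fin n) (Fin p) ℝ) : ℝ := Real.sqrt ((Mᵀ * M).trace)

/-- Levy distance between two distribution functions on `ℝ`. -/
def levyDist (F G : ℝ → ℝ) : ℝ :=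
  sInf {ε : ℝ | 0 < ε ∧ ∀ x : ℝ, F (x - ε) - ε ≤ G x ∧ G x ≤ F (x + ε) + ε}

section auxStatement5

open Matrix Finset



section aux

/-- Markov counting bound. -/
lemma markov_count {n : ℕ} (d : Fin n → ℝ) {ε : ℝ} (hε : 0 < ε) :
    ((Finset.univ.filter fun k => ε ≤ |d k|).card : ℝ) ≤ (∑ k, |d k|) / ε := by
  rw [le_div_iff₀ hε]
  calc ((Finset.univ.filter fun k => ε ≤ |d k|).card : ℝ) * ε
      = ∑ _k ∈ Finset.univ.filter fun k => ε ≤ |d k|, ε := by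
        rw [Finset.sum_const, nsmul_eq_mul]
    _ ≤ ∑ k ∈ Finset.univ.filter fun k => ε ≤ |d k|, |d k| :=
        Finset.sum_le_sum fun k hk => (Finset.mem_filter.mp hk).2
    _ ≤ ∑ k, |d k| :=
        Finset.sum_le_sum_of_subset_of_nonneg (Finset.filter_subset _ _)
          (fun k _ _ => abs_nonneg _)

lemma count_shift {n : ℕ} (f g : Fin n → ℝ) {ε : ℝ} (hε : 0 < ε) (y : ℝ) :
    ((Finset.univ.filter fun k => f k ≤ y).card : ℝ) ≤
      (Finset.univ.filter fun k => g k ≤ y + ε).card + (∑ k, |f k - g k|) / ε := by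
  have hsub : (Finset.univ.filter fun k => f k ≤ y) ⊆
      (Finset.univ.filter fun k => g k ≤ y + ε) ∪
        (Finset.univ.filter fun k => ε ≤ |f k - g k|) := by
    intro k hk
    simp only [Finset.mem_filter, Finset.mem_union, Finset.mem_univ, true_and] at hk ⊢
    by_cases h : g k ≤ y + ε
    · exact Or.inl h
    · push_neg at h
      right
      rw [abs_sub_comm]
      calc ε = (y + ε) - y := by ring
        _ ≤ g k - f k := by linarith
        _ ≤ |g k - f k| := le_abs_self _
  calc ((Finset.univ.filter fun k => f k ≤ y).card : ℝ)
      ≤ ((Finset.univ.filter fun k => g k ≤ y + ε) ∪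
          (Finset.univ.filter fun k => ε ≤ |f k - g k|)).card := by
        exact_mod_cast Finset.card_le_card hsub
    _ ≤ ((Finset.univ.filter fun k => g k ≤ y + ε).card : ℝ) +
          ((Finset.univ.filter fun k => ε ≤ |f k - g k|).card : ℝ) := by
        exact_mod_cast Finset.card_union_le _ _
    _ ≤ _ := by
        gcongr
        exact markov_count _ hε

end aux




/-- Any doubly substochastic nonnegative matrix is dominated entrywise by a doubly
stochastic matrix. -/
lemma exists_doublyStochastic_ge {n : ℕ} (D : Matrix (Fin n) (Fin n) ℝ)
    (h0 : ∀ i j, 0 ≤ D i j) (hrow : ∀ i, ∑ j, D i j ≤ 1) (hcol : ∀ j, ∑ i, D i j ≤ 1) :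
    ∃ D' ∈ doublyStochastic ℝ (Fin n), ∀ i j, D i j ≤ D' i j := by
  classical
  set r : Fin n → ℝ := fun i => 1 - ∑ j, D i j with hr
  set c : Fin n → ℝ := fun j => 1 - ∑ i, D i j with hc
  have hr0 : ∀ i, 0 ≤ r i := fun i => by simp [hr, hrow i]
  have hc0 : ∀ j, 0 ≤ c j := fun j => by simp [hc, hcol j]
  set S : ℝ := ∑ i, r i with hS
  have hSc : S = ∑ j, c j := by
    simp only [hS, hr, hc, Finset.sum_sub_distrib]
    rw [Finset.sum_comm]
  have hS0 : 0 ≤ S := Finset.sum_nonneg fun i _ => hr0 i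
  rcases eq_or_lt_of_le hS0 with hSz | hSp
  · -- S = 0 : D is already doubly stochastic
    have hri : ∀ i, r i = 0 := by
      intro i
      have := (Finset.sum_eq_zero_iff_of_nonneg (fun i _ => hr0 i)).mp hSz.symm
      exact this i (Finset.mem_univ i)
    have hcj : ∀ j, c j = 0 := by
      intro j
      have h2 : ∑ j, c j = 0 := by rw [← hSc, ← hSz]
      exact (Finset.sum_eq_zero_iff_of_nonneg (fun j _ => hc0 j)).mp h2 j (Finset.mem_univ j)
    refine ⟨D, ?_, fun i j => le_refl _⟩
    rw [mem_doublyStochastic_iff_sum]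
    refine ⟨h0, fun i => ?_, fun j => ?_⟩
    · have := hri i; simp only [hr] at this; linarith
    · have := hcj j; simp only [hc] at this; linarith
  · -- S > 0
    refine ⟨D + Matrix.of (fun i j => r i * c j / S), ?_, fun i j => ?_⟩
    · rw [mem_doublyStochastic_iff_sum]
      refine ⟨fun i j => ?_, fun i => ?_, fun j => ?_⟩
      · have : 0 ≤ r i * c j / S := div_nonneg (mul_nonneg (hr0 i) (hc0 j)) hS0
        simpa [Matrix.add_apply, Matrix.of_apply] using add_nonneg (h0 i j) this
      · simp only [Matrix.add_apply, Matrix.of_apply, Finset.sum_add_distrib]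
        have : ∑ j, r i * c j / S = r i := by
          rw [← Finset.sum_div, ← Finset.mul_sum, ← hSc]
          field_simp
        rw [this]
        simp [hr]
      · simp only [Matrix.add_apply, Matrix.of_apply, Finset.sum_add_distrib]
        have : ∑ i, r i * c j / S = c j := by
          rw [← Finset.sum_div]
          rw [← Finset.sum_mul, ← hS]
          field_simp [mul_comm]
        rw [this]
        simp [hc]
    · have : 0 ≤ r i * c j / S := div_nonneg (mul_nonneg (hr0 i) (hc0 j)) hS0
      simp only [Matrix.add_apply, Matrix.of_apply]
      linarith

/-- A nonnegative bilinear functional over a doubly substochastic matrix is dominated by its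
value at some permutation. -/
lemma exists_perm_bilinear_ge {n : ℕ} (s t : Fin n → ℝ) (hs : ∀ i, 0 ≤ s i) (ht : ∀ j, 0 ≤ t j)
    (D : Matrix (Fin n) (Fin n) ℝ)
    (h0 : ∀ i j, 0 ≤ D i j) (hrow : ∀ i, ∑ j, D i j ≤ 1) (hcol : ∀ j, ∑ i, D i j ≤ 1) :
    ∃ σ : Equiv.Perm (Fin n), ∑ i, ∑ j, s i * t j * D i j ≤ ∑ i, s i * t (σ i) := by
  classical
  obtain ⟨D', hD', hle⟩ := exists_doublyStochastic_ge D h0 hrow hcol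
  obtain ⟨w, hw0, hw1, hwD⟩ := exists_eq_sum_perm_of_mem_doublyStochastic hD'
  obtain ⟨σ, -, hσ⟩ := Finset.exists_max_image Finset.univ
    (fun σ : Equiv.Perm (Fin n) => ∑ i, s i * t (σ i)) ⟨1, Finset.mem_univ 1⟩
  refine ⟨σ, ?_⟩
  calc ∑ i, ∑ j, s i * t j * D i j
      ≤ ∑ i, ∑ j, s i * t j * D' i j := by
        refine Finset.sum_le_sum fun i _ => Finset.sum_le_sum fun j _ => ?_
        exact mul_le_mul_of_nonneg_left (hle i j) (mul_nonneg (hs i) (ht j))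
    _ = ∑ σ' : Equiv.Perm (Fin n), w σ' * ∑ i, s i * t (σ' i) := by
        rw [← hwD]
        have hperm : ∀ (σ' : Equiv.Perm (Fin n)) (i j : Fin n),
            (σ'.permMatrix ℝ) i j = if σ' i = j then 1 else 0 := by
          intro σ' i j
          simp [Equiv.Perm.permMatrix, PEquiv.toMatrix_apply, Equiv.toPEquiv_apply]
        have : ∀ i j, ((∑ σ' : Equiv.Perm (Fin n), w σ' • σ'.permMatrix ℝ) i j)
            = ∑ σ' : Equiv.Perm (Fin n), w σ' * (if σ' i = j then 1 else 0) := by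
          intro i j
          rw [Matrix.sum_apply]
          exact Finset.sum_congr rfl fun σ' _ => by rw [Matrix.smul_apply, hperm, smul_eq_mul]
        simp only [this]
        calc ∑ i, ∑ j, s i * t j * ∑ σ' : Equiv.Perm (Fin n),
                w σ' * (if σ' i = j then 1 else 0)
            = ∑ i, ∑ j, ∑ σ' : Equiv.Perm (Fin n),
                w σ' * (s i * t j * (if σ' i = j then 1 else 0)) := by
              refine Finset.sum_congr rfl fun i _ => Finset.sum_congr rfl fun j _ => ?_
              rw [Finset.mul_sum]
              exact Finset.sum_congr rfl fun σ' _ => by ring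
          _ = ∑ σ' : Equiv.Perm (Fin n), ∑ i, ∑ j,
                w σ' * (s i * t j * (if σ' i = j then 1 else 0)) := by
              have h1 : ∀ i : Fin n, (∑ j, ∑ σ' : Equiv.Perm (Fin n),
                  w σ' * (s i * t j * (if σ' i = j then 1 else 0)))
                  = ∑ σ' : Equiv.Perm (Fin n), ∑ j,
                      w σ' * (s i * t j * (if σ' i = j then 1 else 0)) :=
                fun i => Finset.sum_comm
              simp only [h1]
              exact Finset.sum_comm
          _ = ∑ σ' : Equiv.Perm (Fin n), w σ' * ∑ i, s i * t (σ' i) := by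
              refine Finset.sum_congr rfl fun σ' _ => ?_
              rw [Finset.mul_sum]
              refine Finset.sum_congr rfl fun i _ => ?_
              rw [Finset.sum_eq_single (σ' i)]
              · simp
              · intro b _ hb; simp [Ne.symm hb, hb]
              · intro h; exact absurd (Finset.mem_univ _) h
    _ ≤ ∑ σ' : Equiv.Perm (Fin n), w σ' * ∑ i, s i * t (σ i) := by
        refine Finset.sum_le_sum fun σ' _ => ?_
        exact mul_le_mul_of_nonneg_left (hσ σ' (Finset.mem_univ σ')) (hw0 σ')
    _ = ∑ i, s i * t (σ i) := by
        rw [← Finset.sum_mul, hw1, one_mul]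




lemma diag_mul_transpose_nonneg {n p : ℕ} (X : Matrix (Fin n) (Fin p) ℝ) (i : Fin n) :
    0 ≤ (X * Xᵀ) i i := by
  rw [Matrix.mul_apply]
  exact Finset.sum_nonneg fun c _ => by
    rw [Matrix.transpose_apply]; exact mul_self_nonneg _

lemma diag_mul_diag_mul_transpose {n p : ℕ} (X : Matrix (Fin n) (Fin p) ℝ) (d : Fin p → ℝ)
    (i : Fin n) : (X * Matrix.diagonal d * Xᵀ) i i = ∑ j, X i j ^ 2 * d j := by
  rw [Matrix.mul_apply]
  refine Finset.sum_congr rfl fun j _ => ?_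
  rw [Matrix.mul_diagonal, Matrix.transpose_apply]
  ring

/-- Bessel-type inequality for matrices with orthogonal rows. -/
lemma bessel_rows {n m p : ℕ} (P : Matrix (Fin n) (Fin p) ℝ) (Q : Matrix (Fin m) (Fin p) ℝ)
    (lam : Fin n → ℝ) (mu : Fin m → ℝ)
    (hP : P * Pᵀ = Matrix.diagonal lam) (hQ : Q * Qᵀ = Matrix.diagonal mu) (i : Fin n) :
    ∑ j, (P * Qᵀ) i j ^ 2 * (if mu j = 0 then 0 else (mu j)⁻¹) ≤ lam i := by
  classical
  set dm : Fin m → ℝ := fun j => if mu j = 0 then 0 else (mu j)⁻¹ with hdm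
  set T : Matrix (Fin p) (Fin p) ℝ := Qᵀ * Matrix.diagonal dm * Q with hT
  have hTt : Tᵀ = T := by
    rw [hT, Matrix.transpose_mul, Matrix.transpose_mul, Matrix.transpose_transpose,
      Matrix.diagonal_transpose, Matrix.mul_assoc]
  have hT2 : T * T = T := by
    rw [hT]
    calc Qᵀ * Matrix.diagonal dm * Q * (Qᵀ * Matrix.diagonal dm * Q)
        = Qᵀ * (Matrix.diagonal dm * (Q * Qᵀ) * Matrix.diagonal dm) * Q := by
          simp only [Matrix.mul_assoc]
      _ = Qᵀ * Matrix.diagonal dm * Q := by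
          have hd : (fun j => dm j * mu j * dm j) = dm := by
            funext j
            by_cases h : mu j = 0 <;> simp [hdm, h]
          rw [hQ, Matrix.diagonal_mul_diagonal, Matrix.diagonal_mul_diagonal, hd]
  have e1 : (P * (1 - T)) * (P * (1 - T))ᵀ = P * Pᵀ - P * T * Pᵀ := by
    have h1T : (1 - T)ᵀ = 1 - T := by
      rw [Matrix.transpose_sub, Matrix.transpose_one, hTt]
    have h2 : (1 - T) * (1 - T) = 1 - T := by
      rw [Matrix.sub_mul, Matrix.one_mul, Matrix.mul_sub, Matrix.mul_one, hT2]
      abel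
    calc (P * (1 - T)) * (P * (1 - T))ᵀ
        = (P * (1 - T)) * ((1 - T) * Pᵀ) := by rw [Matrix.transpose_mul, h1T]
      _ = P * ((1 - T) * (1 - T)) * Pᵀ := by simp only [Matrix.mul_assoc]
      _ = P * (1 - T) * Pᵀ := by rw [h2]
      _ = P * Pᵀ - P * T * Pᵀ := by
          rw [Matrix.mul_sub, Matrix.mul_one, Matrix.sub_mul]
  have key : 0 ≤ (P * Pᵀ - P * T * Pᵀ) i i := by
    rw [← e1]; exact diag_mul_transpose_nonneg _ i
  have e2 : (P * T * Pᵀ) i i = ∑ j, (P * Qᵀ) i j ^ 2 * dm j := by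
    have : P * T * Pᵀ = (P * Qᵀ) * Matrix.diagonal dm * (P * Qᵀ)ᵀ := by
      rw [hT, Matrix.transpose_mul, Matrix.transpose_transpose]
      simp only [Matrix.mul_assoc]
    rw [this, diag_mul_diag_mul_transpose]
  have e3 : (P * Pᵀ) i i = lam i := by rw [hP, Matrix.diagonal_apply_eq]
  have := key
  rw [Matrix.sub_apply, e2, e3] at this
  linarith




/-- Spectral decomposition data for `A * Aᵀ` over `ℝ`. -/
lemma exists_orth_diag {n p : ℕ} (A : Matrix (Fin n) (Fin p) ℝ)
    (hA : (A * Aᵀ).IsHermitian) :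
    ∃ U : Matrix (Fin n) (Fin n) ℝ,
      U * Uᵀ = 1 ∧ Uᵀ * U = 1 ∧
      (Uᵀ * A) * (Uᵀ * A)ᵀ = Matrix.diagonal hA.eigenvalues := by
  classical
  set U₀ : Matrix (Fin n) (Fin n) ℝ := (hA.eigenvectorUnitary : Matrix (Fin n) (Fin n) ℝ)
    with hU₀
  have hmem : U₀ ∈ Matrix.unitaryGroup (Fin n) ℝ := hA.eigenvectorUnitary.2
  have hstar : star U₀ = U₀ᵀ := by
    rw [Matrix.star_eq_conjTranspose, Matrix.conjTranspose_eq_transpose_of_trivial]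
  have h1 : U₀ * U₀ᵀ = 1 := by rw [← hstar]; exact Matrix.mem_unitaryGroup_iff.mp hmem
  have h2 : U₀ᵀ * U₀ = 1 := by rw [← hstar]; exact Matrix.mem_unitaryGroup_iff'.mp hmem
  refine ⟨U₀, h1, h2, ?_⟩
  have hd : star (hA.eigenvectorUnitary : Matrix (Fin n) (Fin n) ℝ) * (A * Aᵀ) *
      (hA.eigenvectorUnitary : Matrix (Fin n) (Fin n) ℝ) =
      Matrix.diagonal (RCLike.ofReal ∘ hA.eigenvalues) := by
    have := hA.conjStarAlgAut_star_eigenvectorUnitary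
    rwa [Unitary.conjStarAlgAut_apply, Unitary.coe_star, star_star] at this
  rw [hstar] at hd
  calc (U₀ᵀ * A) * (U₀ᵀ * A)ᵀ = U₀ᵀ * (A * Aᵀ) * U₀ := by
        rw [Matrix.transpose_mul, Matrix.transpose_transpose]
        simp only [Matrix.mul_assoc]
    _ = Matrix.diagonal hA.eigenvalues := by
        rw [← hU₀] at hd
        rw [hd, RCLike.ofReal_real_eq_id]
        simp

lemma row_sq_sum {n : ℕ} {W : Matrix (Fin n) (Fin n) ℝ} (h : W * Wᵀ = 1) (i : Fin n) :
    ∑ j, W i j ^ 2 = 1 := by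
  have := congrArg (fun M => M i i) h
  simp only [Matrix.mul_apply, Matrix.one_apply_eq] at this
  rw [← this]
  exact Finset.sum_congr rfl fun j _ => by rw [Matrix.transpose_apply]; ring

lemma col_sq_sum {n : ℕ} {W : Matrix (Fin n) (Fin n) ℝ} (h : Wᵀ * W = 1) (j : Fin n) :
    ∑ i, W i j ^ 2 = 1 := by
  have := row_sq_sum (W := Wᵀ) (by rwa [Matrix.transpose_transpose]) j
  simpa using this

set_option maxHeartbeats 1000000 in
/-- Hoffman–Wielandt-type pairing for the singular values of `A` and `B`. -/
lemma exists_perm_pairing {n p : ℕ} (A B : Matrix (Fin n) (Fin p) ℝ)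
    (hA : (A * Aᵀ).IsHermitian) (hB : (B * Bᵀ).IsHermitian) :
    ∃ σ : Equiv.Perm (Fin n),
      ∑ k, (Real.sqrt (hA.eigenvalues k) - Real.sqrt (hB.eigenvalues (σ k))) ^ 2 ≤
        ((A - B)ᵀ * (A - B)).trace := by
  classical
  obtain ⟨U, hU1, hU2, hP⟩ := exists_orth_diag A hA
  obtain ⟨V, hV1, hV2, hQ⟩ := exists_orth_diag B hB
  set lam := hA.eigenvalues with hlamdef
  set mu := hB.eigenvalues with hmudef
  set P : Matrix (Fin n) (Fin p) ℝ := Uᵀ * A with hPdef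
  set Q : Matrix (Fin n) (Fin p) ℝ := Vᵀ * B with hQdef
  set W : Matrix (Fin n) (Fin n) ℝ := Uᵀ * V with hWdef
  set G : Matrix (Fin n) (Fin n) ℝ := P * Qᵀ with hGdef
  have hlam0 : ∀ i, 0 ≤ lam i := fun i => by
    have := diag_mul_transpose_nonneg P i
    rwa [hP, Matrix.diagonal_apply_eq] at this
  have hmu0 : ∀ j, 0 ≤ mu j := fun j => by
    have := diag_mul_transpose_nonneg Q j
    rwa [hQ, Matrix.diagonal_apply_eq] at this
  set s : Fin n → ℝ := fun i => Real.sqrt (lam i) with hsdef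
  set t : Fin n → ℝ := fun j => Real.sqrt (mu j) with htdef
  have hs0 : ∀ i, 0 ≤ s i := fun i => Real.sqrt_nonneg _
  have ht0 : ∀ j, 0 ≤ t j := fun j => Real.sqrt_nonneg _
  have hs2 : ∀ i, s i ^ 2 = lam i := fun i => Real.sq_sqrt (hlam0 i)
  have ht2 : ∀ j, t j ^ 2 = mu j := fun j => Real.sq_sqrt (hmu0 j)
  -- orthogonality of W
  have hWWt : W * Wᵀ = 1 := by
    rw [hWdef, Matrix.transpose_mul, Matrix.transpose_transpose]
    calc Uᵀ * V * (Vᵀ * U) = Uᵀ * (V * Vᵀ) * U := by simp only [Matrix.mul_assoc]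
      _ = 1 := by rw [hV1, Matrix.mul_one, hU2]
  have hWtW : Wᵀ * W = 1 := by
    rw [hWdef, Matrix.transpose_mul, Matrix.transpose_transpose]
    calc Vᵀ * U * (Uᵀ * V) = Vᵀ * (U * Uᵀ) * V := by simp only [Matrix.mul_assoc]
      _ = 1 := by rw [hU1, Matrix.mul_one, hV2]
  -- Cauchy-Schwarz entrywise bound for G
  have hGCS : ∀ i j, G i j ^ 2 ≤ lam i * mu j := by
    intro i j
    have h1 : G i j = ∑ c, P i c * Q j c := by
      rw [hGdef, Matrix.mul_apply]
      exact Finset.sum_congr rfl fun c _ => by rw [Matrix.transpose_apply]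
    have h2 : (∑ c, P i c * Q j c) ^ 2 ≤ (∑ c, P i c ^ 2) * ∑ c, Q j c ^ 2 :=
      Finset.sum_mul_sq_le_sq_mul_sq _ _ _
    have h3 : ∑ c, P i c ^ 2 = lam i := by
      have := congrArg (fun M => M i i) hP
      simp only [Matrix.mul_apply, Matrix.diagonal_apply_eq] at this
      rw [← this]
      exact Finset.sum_congr rfl fun c _ => by rw [Matrix.transpose_apply]; ring
    have h4 : ∑ c, Q j c ^ 2 = mu j := by
      have := congrArg (fun M => M j j) hQ
      simp only [Matrix.mul_apply, Matrix.diagonal_apply_eq] at this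
      rw [← this]
      exact Finset.sum_congr rfl fun c _ => by rw [Matrix.transpose_apply]; ring
    rw [h1]
    rw [h3, h4] at h2
    exact h2
  -- pseudo-inverses
  set ml : Fin n → ℝ := fun i => if lam i = 0 then 0 else (lam i)⁻¹ with hml
  set mm : Fin n → ℝ := fun j => if mu j = 0 then 0 else (mu j)⁻¹ with hmm
  have hml0 : ∀ i, 0 ≤ ml i := fun i => by
    by_cases h : lam i = 0 <;> simp [hml, h, inv_nonneg.mpr (hlam0 i)]
  have hmm0 : ∀ j, 0 ≤ mm j := fun j => by
    by_cases h : mu j = 0 <;> simp [hmm, h, inv_nonneg.mpr (hmu0 j)]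
  have hmll : ∀ i, ml i * lam i ≤ 1 := fun i => by
    by_cases h : lam i = 0 <;> simp [hml, h]
  have hmmm : ∀ j, mm j * mu j ≤ 1 := fun j => by
    by_cases h : mu j = 0 <;> simp [hmm, h]
  -- Bessel bounds
  have hbr : ∀ i, ∑ j, G i j ^ 2 * mm j ≤ lam i := fun i => by
    have := bessel_rows P Q lam mu hP hQ i
    simpa [hGdef, hmm] using this
  have hbc : ∀ j, ∑ i, G i j ^ 2 * ml i ≤ mu j := fun j => by
    have := bessel_rows Q P mu lam hQ hP j
    have hGt : ∀ i, (Q * Pᵀ) j i = G i j := by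
      intro i
      rw [hGdef, Matrix.mul_apply, Matrix.mul_apply]
      exact Finset.sum_congr rfl fun c _ => by
        rw [Matrix.transpose_apply, Matrix.transpose_apply]; ring
    simp only [hGt] at this
    simpa [hml] using this
  -- the doubly substochastic matrix
  set D : Matrix (Fin n) (Fin n) ℝ :=
    Matrix.of (fun i j => (W i j ^ 2 + G i j ^ 2 * ml i * mm j) / 2) with hD
  have hD0 : ∀ i j, 0 ≤ D i j := fun i j => by
    have : 0 ≤ G i j ^ 2 * ml i * mm j :=
      mul_nonneg (mul_nonneg (sq_nonneg _) (hml0 i)) (hmm0 j)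
    simp only [hD, Matrix.of_apply]
    positivity
  have hDrow : ∀ i, ∑ j, D i j ≤ 1 := by
    intro i
    simp only [hD, Matrix.of_apply]
    rw [← Finset.sum_div, Finset.sum_add_distrib]
    have e : ∑ j, G i j ^ 2 * ml i * mm j = ml i * ∑ j, G i j ^ 2 * mm j := by
      rw [Finset.mul_sum]
      exact Finset.sum_congr rfl fun j _ => by ring
    have : ml i * ∑ j, G i j ^ 2 * mm j ≤ ml i * lam i :=
      mul_le_mul_of_nonneg_left (hbr i) (hml0 i)
    rw [row_sq_sum hWWt i, e]
    have := hmll i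
    linarith [mul_le_mul_of_nonneg_left (hbr i) (hml0 i), hmll i]
  have hDcol : ∀ j, ∑ i, D i j ≤ 1 := by
    intro j
    simp only [hD, Matrix.of_apply]
    rw [← Finset.sum_div, Finset.sum_add_distrib]
    have e : ∑ i, G i j ^ 2 * ml i * mm j = mm j * ∑ i, G i j ^ 2 * ml i := by
      rw [Finset.mul_sum]
      exact Finset.sum_congr rfl fun i _ => by ring
    rw [col_sq_sum hWtW j, e]
    linarith [mul_le_mul_of_nonneg_left (hbc j) (hmm0 j), hmmm j]
  -- entrywise bound
  have hentry : ∀ i j, W i j * G i j ≤ s i * t j * D i j := by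
    intro i j
    by_cases hz : lam i = 0 ∨ mu j = 0
    · have hG0 : G i j = 0 := by
        have h1 := hGCS i j
        have h2 : lam i * mu j = 0 := by
          rcases hz with h | h <;> simp [h]
        have := sq_nonneg (G i j)
        have hGsq : G i j ^ 2 = 0 := le_antisymm (h2 ▸ h1) this
        exact pow_eq_zero_iff (n := 2) (by norm_num) |>.mp hGsq
      rw [hG0]
      have : 0 ≤ s i * t j * D i j :=
        mul_nonneg (mul_nonneg (hs0 i) (ht0 j)) (hD0 i j)
      simpa using this
    · push_neg at hz
      obtain ⟨hl, hm⟩ := hz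
      have hlp : 0 < lam i := lt_of_le_of_ne (hlam0 i) (Ne.symm hl)
      have hmp : 0 < mu j := lt_of_le_of_ne (hmu0 j) (Ne.symm hm)
      have hsp : 0 < s i := Real.sqrt_pos.mpr hlp
      have htp : 0 < t j := Real.sqrt_pos.mpr hmp
      have hDij : D i j = (W i j ^ 2 + G i j ^ 2 * (lam i)⁻¹ * (mu j)⁻¹) / 2 := by
        simp [hD, hml, hmm, hl, hm]
      rw [hDij]
      have key := sq_nonneg (s i * t j * W i j - G i j)
      have hst2 : (s i * t j) ^ 2 = lam i * mu j := by
        rw [mul_pow, hs2, ht2]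
      have hstp : 0 < s i * t j := mul_pos hsp htp
      set st := s i * t j with hstdef
      have hgeq : G i j ^ 2 * (lam i)⁻¹ * (mu j)⁻¹ = (G i j / st) ^ 2 := by
        rw [← hs2 i, ← ht2 j, hstdef, div_pow, mul_pow, div_eq_mul_inv, mul_inv, ← mul_assoc]
      rw [hgeq]
      have h1 : 2 * (W i j * (G i j / st)) ≤ W i j ^ 2 + (G i j / st) ^ 2 := by
        nlinarith [sq_nonneg (W i j - G i j / st)]
      have h2 : (W i j * (G i j / st)) * st = W i j * G i j := by
        field_simp
      rw [← h2]
      calc (W i j * (G i j / st)) * st ≤ ((W i j ^ 2 + (G i j / st) ^ 2) / 2) * st := by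
            apply mul_le_mul_of_nonneg_right _ hstp.le
            linarith
        _ = st * ((W i j ^ 2 + (G i j / st) ^ 2) / 2) := mul_comm _ _
  -- trace identities
  have e1 : W * Gᵀ = Uᵀ * (B * Aᵀ) * U := by
    rw [hWdef, hGdef, hPdef, hQdef]
    simp only [Matrix.transpose_mul, Matrix.transpose_transpose, Matrix.mul_assoc]
    congr 1
    rw [← Matrix.mul_assoc V Vᵀ, hV1, Matrix.one_mul]
  have htr : (Aᵀ * B).trace = ∑ i, ∑ j, W i j * G i j := by
    have e2 : (W * Gᵀ).trace = (Aᵀ * B).trace := by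
      rw [e1, Matrix.trace_mul_comm (Uᵀ * (B * Aᵀ)) U, ← Matrix.mul_assoc, hU1,
        Matrix.one_mul, Matrix.trace_mul_comm]
    rw [← e2, Matrix.trace]
    refine Finset.sum_congr rfl fun i _ => ?_
    rw [Matrix.diag_apply, Matrix.mul_apply]
    exact Finset.sum_congr rfl fun j _ => by rw [Matrix.transpose_apply]
  have hta : (Aᵀ * A).trace = ∑ i, lam i := by
    have e3 : Pᵀ * P = Aᵀ * A := by
      rw [hPdef, Matrix.transpose_mul, Matrix.transpose_transpose, Matrix.mul_assoc,
        ← Matrix.mul_assoc U Uᵀ, hU1, Matrix.one_mul]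
    rw [← e3, ← Matrix.trace_mul_comm, hP, Matrix.trace_diagonal]
  have htb : (Bᵀ * B).trace = ∑ j, mu j := by
    have e3 : Qᵀ * Q = Bᵀ * B := by
      rw [hQdef, Matrix.transpose_mul, Matrix.transpose_transpose, Matrix.mul_assoc,
        ← Matrix.mul_assoc V Vᵀ, hV1, Matrix.one_mul]
    rw [← e3, ← Matrix.trace_mul_comm, hQ, Matrix.trace_diagonal]
  have htd : ((A - B)ᵀ * (A - B)).trace =
      (Aᵀ * A).trace + (Bᵀ * B).trace - 2 * (Aᵀ * B).trace := by
    have e4 : (A - B)ᵀ * (A - B) = Aᵀ * A - Aᵀ * B - (Bᵀ * A - Bᵀ * B) := by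
      rw [Matrix.transpose_sub, Matrix.sub_mul, Matrix.mul_sub, Matrix.mul_sub]
    have e5 : (Bᵀ * A).trace = (Aᵀ * B).trace := by
      rw [← Matrix.trace_transpose (Bᵀ * A), Matrix.transpose_mul, Matrix.transpose_transpose]
    rw [e4, Matrix.trace_sub, Matrix.trace_sub, Matrix.trace_sub, e5]
    ring
  -- Birkhoff step
  have hb : (Aᵀ * B).trace ≤ ∑ i, ∑ j, s i * t j * D i j := by
    rw [htr]
    exact Finset.sum_le_sum fun i _ => Finset.sum_le_sum fun j _ => hentry i j
  obtain ⟨σ, hσ⟩ := exists_perm_bilinear_ge s t hs0 ht0 D hD0 hDrow hDcol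
  refine ⟨σ, ?_⟩
  have hsum : ∑ k, (s k - t (σ k)) ^ 2 =
      (∑ k, lam k) + (∑ k, mu k) - 2 * ∑ k, s k * t (σ k) := by
    have h1 : ∀ k, (s k - t (σ k)) ^ 2 = lam k + mu (σ k) - 2 * (s k * t (σ k)) := by
      intro k
      have := hs2 k
      have := ht2 (σ k)
      nlinarith [hs2 k, ht2 (σ k)]
    rw [Finset.sum_congr rfl fun k _ => h1 k]
    rw [Finset.sum_sub_distrib, Finset.sum_add_distrib, ← Finset.mul_sum,
      Equiv.sum_comp σ mu]
  rw [hsum, htd, hta, htb]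
  have : (Aᵀ * B).trace ≤ ∑ k, s k * t (σ k) := le_trans hb hσ
  linarith


lemma levyDist_nonneg (F G : ℝ → ℝ) : 0 ≤ levyDist F G :=
  Real.sInf_nonneg fun _ hx => hx.1.le

lemma perm_filter_card {n : ℕ} (g : Fin n → ℝ) (σ : Equiv.Perm (Fin n)) (y : ℝ) :
    (Finset.univ.filter fun k => g (σ k) ≤ y).card =
      (Finset.univ.filter fun j => g j ≤ y).card := by
  apply Finset.card_bij (fun k _ => σ k)
  · intro k hk; simp only [Finset.mem_filter, Finset.mem_univ, true_and] at hk ⊢; exact hk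
  · intro a _ b _ h; exact σ.injective h
  · intro j hj
    refine ⟨σ.symm j, ?_, by simp⟩
    simp only [Finset.mem_filter, Finset.mem_univ, true_and, Equiv.apply_symm_apply] at hj ⊢
    exact hj

lemma esd_eq {n : ℕ} {S : Matrix (Fin n) (Fin n) ℝ} (hS : S.IsHermitian) (x : ℝ) :
    esd S x = ((Finset.univ.filter fun k => hS.eigenvalues k ≤ x).card : ℝ) / n := by
  classical
  rw [esd, dif_pos hS]

lemma levyDist_le_of_sum_abs {n : ℕ} (hn : 0 < n) {S T : Matrix (Fin n) (Fin n) ℝ}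
    (hS : S.IsHermitian) (hT : T.IsHermitian) (σ : Equiv.Perm (Fin n)) {r : ℝ} (hr : 0 ≤ r)
    (h : ∑ k, |hS.eigenvalues k - hT.eigenvalues (σ k)| ≤ n * r ^ 2) :
    levyDist (esd S) (esd T) ≤ r := by
  have hn' : (0 : ℝ) < n := by exact_mod_cast hn
  refine le_of_forall_gt_imp_ge_of_dense fun ε hε => ?_
  have hε0 : 0 < ε := lt_of_le_of_lt hr hε
  refine csInf_le ⟨0, fun x hx => hx.1.le⟩ ⟨hε0, fun x => ?_⟩
  have hsum : (∑ k, |hS.eigenvalues k - hT.eigenvalues (σ k)|) / ε ≤ n * ε := by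
    rw [div_le_iff₀ hε0]
    calc (∑ k, |hS.eigenvalues k - hT.eigenvalues (σ k)|) ≤ n * r ^ 2 := h
      _ ≤ n * (ε * ε) := by
          have : r ^ 2 ≤ ε * ε := by nlinarith
          nlinarith
      _ = n * ε * ε := by ring
  constructor
  · -- esd S (x - ε) - ε ≤ esd T x
    rw [esd_eq hS, esd_eq hT, sub_le_iff_le_add, div_add' _ _ _ (ne_of_gt hn'),
      div_le_div_iff_of_pos_right hn']
    calc ((Finset.univ.filter fun k => hS.eigenvalues k ≤ x - ε).card : ℝ)
        ≤ ((Finset.univ.filter fun k => hT.eigenvalues (σ k) ≤ x - ε + ε).card : ℝ) +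
            (∑ k, |hS.eigenvalues k - hT.eigenvalues (σ k)|) / ε :=
          count_shift _ _ hε0 _
      _ ≤ ((Finset.univ.filter fun k => hT.eigenvalues k ≤ x).card : ℝ) + ε * n := by
          rw [perm_filter_card (hT.eigenvalues) σ]
          simp only [sub_add_cancel]
          have := hsum
          gcongr <;> linarith
  · -- esd T x ≤ esd S (x + ε) + ε
    rw [esd_eq hS, esd_eq hT, div_add' _ _ _ (ne_of_gt hn'), div_le_div_iff_of_pos_right hn']
    calc ((Finset.univ.filter fun k => hT.eigenvalues k ≤ x).card : ℝ)
        = ((Finset.univ.filter fun k => hT.eigenvalues (σ k) ≤ x).card : ℝ) := by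
          rw [perm_filter_card (hT.eigenvalues) σ]
      _ ≤ ((Finset.univ.filter fun k => hS.eigenvalues k ≤ x + ε).card : ℝ) +
            (∑ k, |hT.eigenvalues (σ k) - hS.eigenvalues k|) / ε := count_shift _ _ hε0 _
      _ ≤ ((Finset.univ.filter fun k => hS.eigenvalues k ≤ x + ε).card : ℝ) + ε * n := by
          gcongr
          calc (∑ k, |hT.eigenvalues (σ k) - hS.eigenvalues k|) / ε
              = (∑ k, |hS.eigenvalues k - hT.eigenvalues (σ k)|) / ε := by
                congr 1; exact Finset.sum_congr rfl fun k _ => abs_sub_comm _ _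
            _ ≤ n * ε := hsum
            _ = ε * n := mul_comm _ _

lemma trace_transpose_mul_self_nonneg {n p : ℕ} (M : Matrix (Fin n) (Fin p) ℝ) :
    0 ≤ (Mᵀ * M).trace := by
  rw [Matrix.trace]
  refine Finset.sum_nonneg fun c _ => ?_
  have := diag_mul_transpose_nonneg Mᵀ c
  rwa [Matrix.transpose_transpose] at this

lemma eig_nonneg {n p : ℕ} (A : Matrix (Fin n) (Fin p) ℝ) (hA : (A * Aᵀ).IsHermitian)
    (i : Fin n) : 0 ≤ hA.eigenvalues i := by
  obtain ⟨U, hU1, hU2, hP⟩ := exists_orth_diag A hA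
  have := diag_mul_transpose_nonneg (Uᵀ * A) i
  rwa [hP, Matrix.diagonal_apply_eq] at this

lemma eig_sum {n p : ℕ} (A : Matrix (Fin n) (Fin p) ℝ) (hA : (A * Aᵀ).IsHermitian) :
    ∑ i, hA.eigenvalues i = (Aᵀ * A).trace := by
  obtain ⟨U, hU1, hU2, hP⟩ := exists_orth_diag A hA
  have e3 : (Uᵀ * A)ᵀ * (Uᵀ * A) = Aᵀ * A := by
    rw [Matrix.transpose_mul, Matrix.transpose_transpose, Matrix.mul_assoc,
      ← Matrix.mul_assoc U Uᵀ, hU1, Matrix.one_mul]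
  rw [← e3, ← Matrix.trace_mul_comm, hP, Matrix.trace_diagonal]

theorem statement5' {n p : ℕ} (hn : 0 < n) (A B : Matrix (Fin n) (Fin p) ℝ) :
    levyDist (esd (A * Aᵀ)) (esd (B * Bᵀ)) ^ 4 ≤
      2 / (n : ℝ) ^ 2 * (Real.sqrt ((Aᵀ * A).trace) ^ 2 + Real.sqrt ((Bᵀ * B).trace) ^ 2) *
        Real.sqrt (((A - B)ᵀ * (A - B)).trace) ^ 2 := by
  classical
  have hn' : (0 : ℝ) < n := by exact_mod_cast hn
  have hermA : (A * Aᵀ).IsHermitian := by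
    have h := Matrix.isHermitian_mul_conjTranspose_self A
    rwa [Matrix.conjTranspose_eq_transpose_of_trivial] at h
  have hermB : (B * Bᵀ).IsHermitian := by
    have h := Matrix.isHermitian_mul_conjTranspose_self B
    rwa [Matrix.conjTranspose_eq_transpose_of_trivial] at h
  set lam := hermA.eigenvalues with hlamdef
  set mu := hermB.eigenvalues with hmudef
  set a : ℝ := (Aᵀ * A).trace with hadef
  set b : ℝ := (Bᵀ * B).trace with hbdef
  set d : ℝ := ((A - B)ᵀ * (A - B)).trace with hddef
  have ha0 : 0 ≤ a := trace_transpose_mul_self_nonneg A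
  have hb0 : 0 ≤ b := trace_transpose_mul_self_nonneg B
  have hd0 : 0 ≤ d := trace_transpose_mul_self_nonneg (A - B)
  have hlam0 : ∀ i, 0 ≤ lam i := eig_nonneg A hermA
  have hmu0 : ∀ j, 0 ≤ mu j := eig_nonneg B hermB
  set s : Fin n → ℝ := fun i => Real.sqrt (lam i) with hsdef
  set t : Fin n → ℝ := fun j => Real.sqrt (mu j) with htdef
  have hs2 : ∀ i, s i ^ 2 = lam i := fun i => Real.sq_sqrt (hlam0 i)
  have ht2 : ∀ j, t j ^ 2 = mu j := fun j => Real.sq_sqrt (hmu0 j)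
  obtain ⟨σ, hσ⟩ := exists_perm_pairing A B hermA hermB
  have h2 : ∑ k, (s k + t (σ k)) ^ 2 ≤ 2 * (a + b) := by
    calc ∑ k, (s k + t (σ k)) ^ 2 ≤ ∑ k, (2 * lam k + 2 * mu (σ k)) := by
          refine Finset.sum_le_sum fun k _ => ?_
          nlinarith [sq_nonneg (s k - t (σ k)), hs2 k, ht2 (σ k)]
      _ = 2 * (a + b) := by
          rw [Finset.sum_add_distrib, ← Finset.mul_sum, ← Finset.mul_sum,
            Equiv.sum_comp σ mu, eig_sum A hermA, eig_sum B hermB]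
          ring
  have h3 : (∑ k, |lam k - mu (σ k)|) ^ 2 ≤ d * (2 * (a + b)) := by
    have habs : ∀ k, |lam k - mu (σ k)| = |s k - t (σ k)| * (s k + t (σ k)) := by
      intro k
      have e : lam k - mu (σ k) = (s k - t (σ k)) * (s k + t (σ k)) := by
        rw [← hs2 k, ← ht2 (σ k)]; ring
      rw [e, abs_mul, abs_of_nonneg (add_nonneg (Real.sqrt_nonneg _) (Real.sqrt_nonneg _))]
    calc (∑ k, |lam k - mu (σ k)|) ^ 2
        = (∑ k, |s k - t (σ k)| * (s k + t (σ k))) ^ 2 := by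
          rw [Finset.sum_congr rfl fun k _ => habs k]
      _ ≤ (∑ k, |s k - t (σ k)| ^ 2) * ∑ k, (s k + t (σ k)) ^ 2 :=
          Finset.sum_mul_sq_le_sq_mul_sq _ _ _
      _ = (∑ k, (s k - t (σ k)) ^ 2) * ∑ k, (s k + t (σ k)) ^ 2 := by
          rw [Finset.sum_congr rfl fun k _ => sq_abs _]
      _ ≤ d * (2 * (a + b)) := by
          refine mul_le_mul hσ h2 (Finset.sum_nonneg fun k _ => sq_nonneg _) hd0
  set SA : ℝ := ∑ k, |lam k - mu (σ k)| with hSAdef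
  have hSA0 : 0 ≤ SA := Finset.sum_nonneg fun k _ => abs_nonneg _
  set r : ℝ := Real.sqrt (SA / n) with hrdef
  have hr2 : r ^ 2 = SA / n := Real.sq_sqrt (div_nonneg hSA0 hn'.le)
  have hL : levyDist (esd (A * Aᵀ)) (esd (B * Bᵀ)) ≤ r := by
    refine levyDist_le_of_sum_abs hn hermA hermB σ (Real.sqrt_nonneg _) ?_
    rw [hr2]
    field_simp
    exact le_rfl
  have hL0 : 0 ≤ levyDist (esd (A * Aᵀ)) (esd (B * Bᵀ)) := levyDist_nonneg _ _
  calc levyDist (esd (A * Aᵀ)) (esd (B * Bᵀ)) ^ 4 ≤ r ^ 4 := pow_le_pow_left₀ hL0 hL 4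
    _ = (r ^ 2) ^ 2 := by ring
    _ = SA ^ 2 / (n : ℝ) ^ 2 := by rw [hr2, div_pow]
    _ ≤ (d * (2 * (a + b))) / (n : ℝ) ^ 2 := by
        gcongr
    _ = 2 / (n : ℝ) ^ 2 * (a + b) * d := by ring
    _ = 2 / (n : ℝ) ^ 2 * (Real.sqrt a ^ 2 + Real.sqrt b ^ 2) * Real.sqrt d ^ 2 := by
        rw [Real.sq_sqrt ha0, Real.sq_sqrt hb0, Real.sq_sqrt hd0]

end auxStatement5

/-- **Levy distance perturbation bound for ESDs** (STATEMENT 5). For any `n × p`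
real matrices `A`, `B` (`n ≥ 1`),
`L⁴(F^{AA'}, F^{BB'}) ≤ 2 n⁻² (‖A‖₂² + ‖B‖₂²) ‖A − B‖₂²`. -/
theorem statement5 {n p : ℕ} (hn : 0 < n) (A B : Matrix (Fin n) (Fin p) ℝ) :
    levyDist (esd (A * Aᵀ)) (esd (B * Bᵀ)) ^ 4 ≤
      2 / (n : ℝ) ^ 2 * (frobNorm A ^ 2 + frobNorm B ^ 2) * frobNorm (A - B) ^ 2 := by
  simpa [frobNorm] using statement5' hn A B

end
end

section
/- Suppose X_{ij}, i,j = 1,2,…, are i.i.d. real random variables with E(X₁₁²) < ∞. Then max_{1≤j≤n} | X̄_j − E(X₁₁) | → 0 almost surely as n → ∞, where X̄_j = n^{-1} ∑_{i=1}^n X_{ij}. -/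
open MeasureTheory ProbabilityTheory Filter
open scoped NNReal ENNReal

noncomputable section

namespace Statement6Aux
open Finset

set_option linter.unusedSectionVars false
set_option linter.unusedVariables false
set_option linter.deprecated false


lemma exp_le_one_add_sq {x : ℝ} (hx : x ≤ 1) : Real.exp x ≤ 1 + x + x ^ 2 := by
  rcases le_or_gt (-1) x with h | h
  · have habs : |x| ≤ 1 := abs_le.2 ⟨h, hx⟩
    have hb := Real.exp_bound habs (n := 2) (by norm_num)
    have hsum : (∑ i ∈ range 2, x ^ i / i.factorial) = 1 + x := by
      simp [Finset.sum_range_succ]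
    rw [hsum] at hb
    have h2 := (abs_le.1 hb).2
    norm_num [Nat.factorial] at h2
    nlinarith [sq_abs x]
  · have h1 : Real.exp x < Real.exp (-1) := Real.exp_lt_exp.2 (by linarith)
    have h2 : Real.exp (-1) < 3 / 4 := by
      rw [Real.exp_neg]
      have he := Real.exp_one_gt_d9
      rw [inv_lt_iff_one_lt_mul₀ (by positivity)]
      nlinarith
    nlinarith [sq_nonneg (x + 1 / 2)]

variable {Ω : Type} [MeasurableSpace Ω] (μ : Measure Ω) [IsProbabilityMeasure μ]

lemma integrable_bdd {f : Ω → ℝ} (hf : AEStronglyMeasurable f μ) {C : ℝ}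
    (h : ∀ ω, |f ω| ≤ C) : Integrable f μ :=
  (integrable_const C).mono' hf (ae_of_all _ (by simpa [Real.norm_eq_abs] using h))

/-- mgf bound for a centered bounded random variable. -/
lemma mgf_le_exp_sq {Y : Ω → ℝ} (hY : Measurable Y) {D t : ℝ}
    (hb : ∀ ω, |Y ω| ≤ D) (hmean : ∫ ω, Y ω ∂μ = 0) (ht : 0 ≤ t) (htD : t * D ≤ 1) :
    ∫ ω, Real.exp (t * Y ω) ∂μ ≤ Real.exp (t ^ 2 * ∫ ω, (Y ω) ^ 2 ∂μ) := by
  have habs : ∀ ω, t * Y ω ≤ t * D := fun ω =>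
    le_trans (le_trans (le_abs_self _)
      (by rw [abs_mul, abs_of_nonneg ht])) (mul_le_mul_of_nonneg_left (hb ω) ht)
  have hint1 : Integrable Y μ := integrable_bdd μ hY.aestronglyMeasurable hb
  have hint2 : Integrable (fun ω => (Y ω) ^ 2) μ := by
    refine integrable_bdd μ ((hY.pow_const 2).aestronglyMeasurable) (C := D ^ 2) fun ω => ?_
    rw [abs_pow]
    exact pow_le_pow_left₀ (abs_nonneg _) (hb ω) 2
  have hintE : Integrable (fun ω => Real.exp (t * Y ω)) μ := by
    refine integrable_bdd μ ((hY.const_mul t).exp.aestronglyMeasurable)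
      (C := Real.exp (t * D)) fun ω => ?_
    rw [abs_of_pos (Real.exp_pos _)]
    exact Real.exp_le_exp.2 (habs ω)
  have hpt : ∀ ω, Real.exp (t * Y ω) ≤ 1 + t * Y ω + t ^ 2 * (Y ω) ^ 2 := fun ω => by
    have := exp_le_one_add_sq (le_trans (habs ω) htD)
    calc Real.exp (t * Y ω) ≤ 1 + t * Y ω + (t * Y ω) ^ 2 := this
    _ = 1 + t * Y ω + t ^ 2 * (Y ω) ^ 2 := by ring
  have hintR : Integrable (fun ω => 1 + t * Y ω + t ^ 2 * (Y ω) ^ 2) μ :=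
    ((integrable_const 1).add (hint1.const_mul t)).add (hint2.const_mul (t ^ 2))
  have hmono : ∫ ω, Real.exp (t * Y ω) ∂μ ≤ ∫ ω, (1 + t * Y ω + t ^ 2 * (Y ω) ^ 2) ∂μ :=
    integral_mono hintE hintR hpt
  have hval : ∫ ω, (1 + t * Y ω + t ^ 2 * (Y ω) ^ 2) ∂μ
      = 1 + t ^ 2 * ∫ ω, (Y ω) ^ 2 ∂μ := by
    have h1 : ∫ ω, (1 + t * Y ω + t ^ 2 * (Y ω) ^ 2) ∂μ
        = (∫ ω, (1 + t * Y ω) ∂μ) + ∫ ω, t ^ 2 * (Y ω) ^ 2 ∂μ :=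
      integral_add ((integrable_const 1).add (hint1.const_mul t)) (hint2.const_mul (t ^ 2))
    have h2 : ∫ ω, (1 + t * Y ω) ∂μ = (∫ _ω, (1 : ℝ) ∂μ) + ∫ ω, t * Y ω ∂μ :=
      integral_add (integrable_const 1) (hint1.const_mul t)
    rw [h1, h2, integral_const, integral_const_mul, integral_const_mul, hmean]
    simp
  rw [hval] at hmono
  have := Real.add_one_le_exp (t ^ 2 * ∫ ω, (Y ω) ^ 2 ∂μ)
  linarith





/-- Chernoff bound for a column sum of composed i.i.d. variables. -/
lemma chernoff_col
    (X : ℕ × ℕ → Ω → ℝ) (hmeas : ∀ ij, Measurable (X ij))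
    (hindep : iIndepFun X μ)
    (hident : ∀ ij, IdentDistrib (X ij) (X (0, 0)) μ μ)
    (g : ℝ → ℝ) (hg : Measurable g) {D : ℝ} (hb : ∀ x, |g x| ≤ D)
    {t : ℝ} (ht : 0 ≤ t) (n j : ℕ) (a : ℝ) :
    (μ {ω | a ≤ ∑ i ∈ Finset.range n, g (X (i, j) ω)}).toReal
      ≤ Real.exp (-t * a) * (∫ ω, Real.exp (t * g (X (0, 0) ω)) ∂μ) ^ n := by
  classical
  set Y : ℕ × ℕ → Ω → ℝ := fun p ω => g (X p ω) with hY
  have hYmeas : ∀ p, Measurable (Y p) := fun p => hg.comp (hmeas p)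
  have hYindep : iIndepFun Y μ :=
    hindep.comp (fun _ => g) (fun _ => hg)
  set s : Finset (ℕ × ℕ) := Finset.range n ×ˢ {j} with hs
  have hcard : s.card = n := by simp [hs]
  have hsum2 : ∀ ω, ∑ p ∈ s, Y p ω = ∑ i ∈ Finset.range n, g (X (i, j) ω) := by
    intro ω
    rw [hs, Finset.sum_product]
    simp [hY]
  have hsum : ∀ ω, (∑ p ∈ s, Y p) ω = ∑ i ∈ Finset.range n, g (X (i, j) ω) := by
    intro ω; rw [Finset.sum_apply]; exact hsum2 ω
  have hSb : ∀ ω, |(∑ p ∈ s, Y p) ω| ≤ n * D := by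
    intro ω
    rw [Finset.sum_apply]
    calc |∑ p ∈ s, Y p ω| ≤ ∑ p ∈ s, |Y p ω| := Finset.abs_sum_le_sum_abs _ _
    _ ≤ ∑ _p ∈ s, D := Finset.sum_le_sum (fun p _ => hb _)
    _ = n * D := by rw [Finset.sum_const, hcard]; simp [mul_comm]
  have hSmeas : Measurable (∑ p ∈ s, Y p) := by
    rw [Finset.sum_fn]; exact Finset.measurable_sum s (fun p _ => hYmeas p)
  have hintE : Integrable (fun ω => Real.exp (t * (∑ p ∈ s, Y p) ω)) μ := by
    refine integrable_bdd μ ((hSmeas.const_mul t).exp.aestronglyMeasurable)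
      (C := Real.exp (t * (n * D))) fun ω => ?_
    rw [abs_of_pos (Real.exp_pos _)]
    refine Real.exp_le_exp.2 ?_
    calc t * (∑ p ∈ s, Y p) ω ≤ |t * (∑ p ∈ s, Y p) ω| := le_abs_self _
    _ = t * |(∑ p ∈ s, Y p) ω| := by rw [abs_mul, abs_of_nonneg ht]
    _ ≤ t * (n * D) := mul_le_mul_of_nonneg_left (hSb ω) ht
  have hch := measure_ge_le_exp_mul_mgf (μ := μ) (X := ∑ p ∈ s, Y p) a ht hintE
  have hset : {ω | a ≤ (∑ p ∈ s, Y p) ω} = {ω | a ≤ ∑ i ∈ Finset.range n, g (X (i, j) ω)} := by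
    ext ω; simp only [Set.mem_setOf_eq, hsum ω]
  rw [hset] at hch
  refine hch.trans ?_
  have hmgf : mgf (∑ p ∈ s, Y p) μ t = ∏ p ∈ s, mgf (Y p) μ t :=
    hYindep.mgf_sum hYmeas s
  have hident' : ∀ p, mgf (Y p) μ t = ∫ ω, Real.exp (t * g (X (0, 0) ω)) ∂μ := by
    intro p
    have h1 : IdentDistrib (Y p) (Y (0, 0)) μ μ := (hident p).comp hg
    have h2 : IdentDistrib (fun ω => Real.exp (t * Y p ω))
        (fun ω => Real.exp (t * Y (0, 0) ω)) μ μ :=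
      h1.comp ((measurable_const_mul t).exp)
    exact h2.integral_eq
  rw [hmgf, Finset.prod_congr rfl (fun p _ => hident' p), Finset.prod_const, hcard]




lemma tsum_meas_ne_top (s : ℕ → Set Ω) (c : ℕ → ℝ) (N : ℕ) (hc : Summable c)
    (h : ∀ n, N ≤ n → μ (s n) ≤ ENNReal.ofReal (c n)) : (∑' n, μ (s n)) ≠ ⊤ := by
  have hb : ∀ n, μ (s n) ≤ ENNReal.ofReal (c n) + (if n < N then 1 else 0) := by
    intro n
    by_cases hn : n < N
    · simp only [hn, if_pos]
      exact le_trans prob_le_one le_add_self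
    · simpa using le_trans (h n (le_of_not_gt hn)) le_self_add
  have h1 : (∑' n, μ (s n)) ≤ (∑' n, ENNReal.ofReal (c n)) + ∑' n, (if n < N then (1:ℝ≥0∞) else 0) := by
    rw [← ENNReal.tsum_add]
    exact ENNReal.tsum_le_tsum hb
  have h2 : (∑' n, ENNReal.ofReal (c n)) ≤ ENNReal.ofReal (∑' n, |c n|) := by
    rw [ENNReal.ofReal_tsum_of_nonneg (fun n => abs_nonneg _) hc.abs]
    exact ENNReal.tsum_le_tsum (fun n => ENNReal.ofReal_le_ofReal (le_abs_self _))
  have h3 : (∑' n, (if n < N then (1:ℝ≥0∞) else 0)) = ∑ n ∈ range N, (if n < N then (1:ℝ≥0∞) else 0) := by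
    refine tsum_eq_sum (fun n hn => ?_)
    rw [Finset.mem_range] at hn
    simp [hn]
  refine ne_top_of_le_ne_top ?_ (h1.trans (add_le_add h2 le_rfl))
  refine ENNReal.add_ne_top.2 ⟨ENNReal.ofReal_ne_top, ?_⟩
  rw [h3]
  exact (ENNReal.sum_lt_top.mpr (fun n _ => by split <;> simp)).ne

lemma markov_abs {f : Ω → ℝ} (hsq : Integrable (fun ω => (f ω) ^ 2) μ) {a : ℝ} (ha : 0 < a) :
    (μ {ω | a < |f ω|}).toReal ≤ (∫ ω, (f ω) ^ 2 ∂μ) / a ^ 2 := by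
  have hsub : {ω | a < |f ω|} ⊆ {ω | a ^ 2 ≤ (f ω) ^ 2} := by
    intro ω hω
    have : a ^ 2 ≤ |f ω| ^ 2 := pow_le_pow_left₀ ha.le (le_of_lt hω) 2
    simpa [sq_abs] using this
  have hm := mul_meas_ge_le_integral_of_nonneg
    (ae_of_all μ (fun ω => sq_nonneg (f ω))) hsq (a ^ 2)
  have hmono : (μ {ω | a < |f ω|}).toReal ≤ (μ {ω | a ^ 2 ≤ (f ω) ^ 2}).toReal :=
    ENNReal.toReal_mono (measure_ne_top _ _) (measure_mono hsub)
  rw [le_div_iff₀ (by positivity)]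
  calc (μ {ω | a < |f ω|}).toReal * a ^ 2 ≤ (μ {ω | a ^ 2 ≤ (f ω) ^ 2}).toReal * a ^ 2 := by
        exact mul_le_mul_of_nonneg_right hmono (by positivity)
  _ = a ^ 2 * (μ {ω | a ^ 2 ≤ (f ω) ^ 2}).toReal := mul_comm _ _
  _ ≤ ∫ ω, (f ω) ^ 2 ∂μ := hm

lemma meas_inter_col
    (X : ℕ × ℕ → Ω → ℝ)
    (hindep : iIndepFun X μ)
    (s : Finset ℕ) (j : ℕ) (A : Set ℝ) (hA : MeasurableSet A) :
    μ (⋂ i ∈ s, X (i, j) ⁻¹' A) = ∏ i ∈ s, μ (X (i, j) ⁻¹' A) := by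
  classical
  have hinj : Set.InjOn (fun i : ℕ => (i, j)) s := fun a _ b _ h => by
    simpa using congrArg Prod.fst h
  have h := hindep.measure_inter_preimage_eq_mul (S := s.image (fun i => (i, j)))
    (sets := fun _ => A) (fun p _ => hA)
  rw [Finset.set_biInter_finset_image] at h
  rw [h, Finset.prod_image (fun a ha b hb hh => hinj ha hb hh)]

lemma sum_odds (m : ℕ) : (∑ k ∈ range m, (2 * k + 1)) = m ^ 2 := by
  induction m with
  | zero => simp
  | succ m ih => rw [Finset.sum_range_succ, ih]; ring



/-- truncation level -/
def BB (ε : ℝ) (n : ℕ) : ℝ := ε * n / (10 * Real.log n)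
/-- truncation -/
def tr (ε : ℝ) (n : ℕ) (x : ℝ) : ℝ := if |x| ≤ BB ε n then x else 0
/-- Chernoff exponent -/
def tt (ε : ℝ) (n : ℕ) : ℝ := 5 * Real.log n / (ε * n)

lemma log_ge_one {n : ℕ} (hn : 3 ≤ n) : 1 ≤ Real.log n := by
  have h3 : (3 : ℝ) ≤ n := by exact_mod_cast hn
  have : Real.exp 1 ≤ n := le_trans (le_of_lt (by
    have := Real.exp_one_lt_d9; linarith)) h3
  rwa [Real.le_log_iff_exp_le (by linarith [Real.exp_pos 1])]

lemma log_pos' {n : ℕ} (hn : 3 ≤ n) : 0 < Real.log n := lt_of_lt_of_le one_pos (log_ge_one hn)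

lemma BB_pos {ε : ℝ} (hε : 0 < ε) {n : ℕ} (hn : 3 ≤ n) : 0 < BB ε n := by
  have hl := log_pos' hn
  have hn0 : (0:ℝ) < n := by exact_mod_cast Nat.lt_of_lt_of_le (by norm_num) hn
  unfold BB; positivity

lemma tr_abs_le {ε : ℝ} (hε : 0 < ε) {n : ℕ} (hn : 3 ≤ n) (x : ℝ) : |tr ε n x| ≤ BB ε n := by
  unfold tr
  split
  · assumption
  · simpa using (BB_pos hε hn).le

lemma tr_sq_le (ε : ℝ) (n : ℕ) (x : ℝ) : (tr ε n x) ^ 2 ≤ x ^ 2 := by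
  unfold tr; split
  · exact le_refl _
  · simpa using sq_nonneg x

lemma tr_meas (ε : ℝ) (n : ℕ) : Measurable (tr ε n) := by
  unfold tr
  exact Measurable.ite (measurableSet_le (measurable_id.abs) measurable_const)
    measurable_id measurable_const

lemma tail_abs_le {ε : ℝ} (hε : 0 < ε) {n : ℕ} (hn : 3 ≤ n) (x : ℝ) :
    |x - tr ε n x| ≤ x ^ 2 / BB ε n := by
  have hB := BB_pos hε hn
  unfold tr; split
  · simpa using by positivity
  · rename_i h
    push_neg at h
    rw [sub_zero]
    rw [le_div_iff₀ hB]
    calc |x| * BB ε n ≤ |x| * |x| := by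
          exact mul_le_mul_of_nonneg_left h.le (abs_nonneg x)
    _ = x ^ 2 := by rw [← sq_abs]; ring

lemma tt_nonneg {ε : ℝ} (hε : 0 < ε) {n : ℕ} (hn : 3 ≤ n) : 0 ≤ tt ε n := by
  have := log_ge_one hn
  have hn0 : (0:ℝ) < n := by exact_mod_cast Nat.lt_of_lt_of_le (by norm_num) hn
  unfold tt; positivity

lemma tt_mul_BB {ε : ℝ} (hε : 0 < ε) {n : ℕ} (hn : 3 ≤ n) : tt ε n * (2 * BB ε n) = 1 := by
  have hl := log_pos' hn
  have hn0 : (0:ℝ) < n := by exact_mod_cast Nat.lt_of_lt_of_le (by norm_num) hn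
  unfold tt BB
  field_simp
  ring

lemma log_le_two_sqrt {n : ℕ} (hn : 1 ≤ n) : Real.log n ≤ 2 * Real.sqrt n := by
  have hn0 : (0:ℝ) < n := by exact_mod_cast hn
  have h1 : Real.log n = 2 * Real.log (Real.sqrt n) := by
    rw [Real.log_sqrt hn0.le]; ring
  rw [h1]
  have := Real.log_le_sub_one_of_pos (Real.sqrt_pos.2 hn0)
  nlinarith [Real.sqrt_nonneg (n:ℝ)]

lemma log_sq_le {n : ℕ} (hn : 1 ≤ n) : (Real.log n) ^ 2 ≤ 4 * n := by
  have h := log_le_two_sqrt hn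
  have hn0 : (0:ℝ) ≤ n := by positivity
  have h2 : (Real.log n) ^ 2 ≤ (2 * Real.sqrt n) ^ 2 := by
    have hl : 0 ≤ Real.log n := Real.log_nonneg (by exact_mod_cast hn)
    exact pow_le_pow_left₀ hl h 2
  calc (Real.log n) ^ 2 ≤ (2 * Real.sqrt n) ^ 2 := h2
  _ = 4 * (Real.sqrt n) ^ 2 := by ring
  _ = 4 * n := by rw [Real.sq_sqrt hn0]

lemma log_le_eight_rpow {n : ℕ} (hn : 1 ≤ n) : Real.log n ≤ 8 * (n : ℝ) ^ (8⁻¹ : ℝ) := by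
  have hn0 : (0:ℝ) < n := by exact_mod_cast hn
  have h1 : Real.log n = 8 * Real.log ((n : ℝ) ^ (8⁻¹ : ℝ)) := by
    rw [Real.log_rpow hn0]; ring
  rw [h1]
  have := Real.log_le_sub_one_of_pos (Real.rpow_pos_of_pos hn0 (8⁻¹ : ℝ))
  nlinarith [Real.rpow_nonneg hn0.le (8⁻¹ : ℝ)]

lemma chernoff_numeric {ε v : ℝ} (hε : 0 < ε) (hv : 0 ≤ v) {n : ℕ} (hn : 3 ≤ n) :
    Real.exp (-(tt ε n) * (ε * n) + n * ((tt ε n) ^ 2 * v))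
      ≤ Real.exp (100 * v / ε ^ 2) / (n : ℝ) ^ 5 := by
  have hL := log_pos' hn
  have hn0 : (0:ℝ) < n := by exact_mod_cast Nat.lt_of_lt_of_le (by norm_num) hn
  have e1 : tt ε n * (ε * n) = 5 * Real.log n := by
    unfold tt; field_simp
  have e2 : (n:ℝ) * ((tt ε n) ^ 2 * v) = 25 * (Real.log n) ^ 2 * v / (ε ^ 2 * n) := by
    unfold tt; field_simp; ring
  have e3 : 25 * (Real.log n) ^ 2 * v / (ε ^ 2 * n) ≤ 100 * v / ε ^ 2 := by
    rw [div_le_div_iff₀ (by positivity) (by positivity)]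
    have h := log_sq_le (le_trans (by norm_num) hn)
    nlinarith [mul_le_mul_of_nonneg_left h (by positivity : (0:ℝ) ≤ 25 * v * ε ^ 2)]
  have e4 : Real.exp (5 * Real.log n) = (n : ℝ) ^ 5 := by
    rw [show (5 : ℝ) * Real.log n = Real.log n * (5:ℕ) by push_cast; ring]
    rw [mul_comm, Real.exp_nat_mul, Real.exp_log hn0]
  calc Real.exp (-(tt ε n) * (ε * n) + n * ((tt ε n) ^ 2 * v))
      ≤ Real.exp (-(5 * Real.log n) + 100 * v / ε ^ 2) := by
        apply Real.exp_le_exp.2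
        rw [neg_mul, e1, e2]
        linarith
  _ = Real.exp (100 * v / ε ^ 2) / (n : ℝ) ^ 5 := by
        rw [Real.exp_add, Real.exp_neg, e4]; ring

variable {Ω : Type} [MeasurableSpace Ω] (μ : Measure Ω) [IsProbabilityMeasure μ]
variable (X : ℕ × ℕ → Ω → ℝ)

/-- centering constant -/
def cc (ε : ℝ) (n : ℕ) : ℝ := ∫ ω, tr ε n (X (0, 0) ω) ∂μ
/-- centered truncation -/
def gg (ε : ℝ) (n : ℕ) (x : ℝ) : ℝ := tr ε n x - cc μ X ε n

variable {μ X}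

section moments
variable (hmeas : ∀ ij, Measurable (X ij)) (hsq : Integrable (fun ω => (X (0, 0) ω) ^ 2) μ)
  {ε : ℝ} (hε : 0 < ε) {n : ℕ} (hn : 3 ≤ n)
include hmeas hε hn

lemma integrable_tr : Integrable (fun ω => tr ε n (X (0, 0) ω)) μ :=
  integrable_bdd μ ((tr_meas ε n).comp (hmeas (0,0))).aestronglyMeasurable
    (fun ω => tr_abs_le hε hn _)

lemma cc_abs_le : |cc μ X ε n| ≤ BB ε n := by
  calc |cc μ X ε n| ≤ ∫ ω, |tr ε n (X (0, 0) ω)| ∂μ := by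
        simpa [Real.norm_eq_abs, cc] using
          norm_integral_le_integral_norm (μ := μ) (fun ω => tr ε n (X (0, 0) ω))
  _ ≤ ∫ _ω, BB ε n ∂μ := by
        refine integral_mono ((integrable_tr hmeas hε hn)).abs (integrable_const _) ?_
        exact fun ω => tr_abs_le hε hn _
  _ = BB ε n := by simp

lemma gg_abs_le (x : ℝ) : |gg μ X ε n x| ≤ 2 * BB ε n := by
  unfold gg
  calc |tr ε n x - cc μ X ε n| ≤ |tr ε n x| + |cc μ X ε n| := abs_sub _ _
  _ ≤ BB ε n + BB ε n := add_le_add (tr_abs_le hε hn x) (cc_abs_le hmeas hε hn)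
  _ = 2 * BB ε n := by ring

lemma gg_meas : Measurable (gg μ X ε n) := (tr_meas ε n).sub measurable_const

lemma gg_mean : ∫ ω, gg μ X ε n (X (0, 0) ω) ∂μ = 0 := by
  unfold gg
  rw [integral_sub (integrable_tr hmeas hε hn) (integrable_const _), integral_const]
  simp [cc]

include hsq in
lemma gg_sq_le : ∫ ω, (gg μ X ε n (X (0, 0) ω)) ^ 2 ∂μ ≤ ∫ ω, (X (0, 0) ω) ^ 2 ∂μ := by
  have hitr := integrable_tr hmeas hε hn (μ := μ)
  have hitr2 : Integrable (fun ω => (tr ε n (X (0, 0) ω)) ^ 2) μ := by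
    refine integrable_bdd μ ((((tr_meas ε n).comp (hmeas (0,0))).pow_const 2).aestronglyMeasurable)
      (C := (BB ε n) ^ 2) fun ω => ?_
    rw [abs_pow]
    exact pow_le_pow_left₀ (abs_nonneg _) (tr_abs_le hε hn _) 2
  have hexp : ∀ ω, (gg μ X ε n (X (0, 0) ω)) ^ 2
      = (tr ε n (X (0, 0) ω)) ^ 2 - (2 * cc μ X ε n) * tr ε n (X (0, 0) ω) + (cc μ X ε n) ^ 2 := by
    intro ω; unfold gg; ring
  have h1 : ∫ ω, (gg μ X ε n (X (0, 0) ω)) ^ 2 ∂μ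
      = (∫ ω, (tr ε n (X (0, 0) ω)) ^ 2 ∂μ) - (2 * cc μ X ε n) * cc μ X ε n + (cc μ X ε n) ^ 2 := by
    rw [show (fun ω => (gg μ X ε n (X (0,0) ω)) ^ 2) = fun ω =>
      (tr ε n (X (0, 0) ω)) ^ 2 - (2 * cc μ X ε n) * tr ε n (X (0, 0) ω) + (cc μ X ε n) ^ 2
      from funext hexp]
    have e1 : ∫ ω, ((tr ε n (X (0, 0) ω)) ^ 2 - (2 * cc μ X ε n) * tr ε n (X (0, 0) ω)
        + (cc μ X ε n) ^ 2) ∂μ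
        = (∫ ω, ((tr ε n (X (0, 0) ω)) ^ 2 - (2 * cc μ X ε n) * tr ε n (X (0, 0) ω)) ∂μ)
          + ∫ _ω, (cc μ X ε n) ^ 2 ∂μ :=
      integral_add (Integrable.sub hitr2 (hitr.const_mul _)) (integrable_const _)
    have e2 : ∫ ω, ((tr ε n (X (0, 0) ω)) ^ 2 - (2 * cc μ X ε n) * tr ε n (X (0, 0) ω)) ∂μ
        = (∫ ω, (tr ε n (X (0, 0) ω)) ^ 2 ∂μ)
          - ∫ ω, (2 * cc μ X ε n) * tr ε n (X (0, 0) ω) ∂μ :=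
      integral_sub hitr2 (hitr.const_mul _)
    rw [e1, e2, integral_const_mul, integral_const]
    simp [cc]
  have h2 : ∫ ω, (tr ε n (X (0, 0) ω)) ^ 2 ∂μ ≤ ∫ ω, (X (0, 0) ω) ^ 2 ∂μ :=
    integral_mono hitr2 hsq (fun ω => tr_sq_le ε n _)
  nlinarith [sq_nonneg (cc μ X ε n)]

end moments

section events
variable {Ω : Type} [MeasurableSpace Ω] {μ : Measure Ω} [IsProbabilityMeasure μ]
variable {X : ℕ × ℕ → Ω → ℝ}
variable (hmeas : ∀ ij, Measurable (X ij))
variable (hindep : iIndepFun X μ)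
variable (hident : ∀ ij, IdentDistrib (X ij) (X (0, 0)) μ μ)

include hmeas hindep hident in
lemma chern_one {ε : ℝ} (hε : 0 < ε) {n : ℕ} (hn : 3 ≤ n) {v : ℝ} (hv : 0 ≤ v)
    (g : ℝ → ℝ) (hgm : Measurable g) (hgb : ∀ x, |g x| ≤ 2 * BB ε n)
    (hgmean : ∫ ω, g (X (0, 0) ω) ∂μ = 0)
    (hgsq : ∫ ω, (g (X (0, 0) ω)) ^ 2 ∂μ ≤ v) (j : ℕ) :
    μ {ω | ε * n ≤ ∑ i ∈ Finset.range n, g (X (i, j) ω)}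
      ≤ ENNReal.ofReal (Real.exp (100 * v / ε ^ 2) / (n : ℝ) ^ 5) := by
  have ht0 := tt_nonneg hε hn
  have hch := chernoff_col μ X hmeas hindep hident g hgm hgb ht0 n j (ε * n)
  have hmgf := mgf_le_exp_sq μ (Y := fun ω => g (X (0, 0) ω)) (hgm.comp (hmeas (0, 0)))
    (D := 2 * BB ε n) (t := tt ε n) (fun ω => hgb _) hgmean ht0 (le_of_eq (tt_mul_BB hε hn))
  have hmgf2 : ∫ ω, Real.exp (tt ε n * g (X (0, 0) ω)) ∂μ ≤ Real.exp ((tt ε n) ^ 2 * v) :=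
    hmgf.trans (Real.exp_le_exp.2 (mul_le_mul_of_nonneg_left hgsq (sq_nonneg _)))
  have hpow : (∫ ω, Real.exp (tt ε n * g (X (0, 0) ω)) ∂μ) ^ n
      ≤ Real.exp ((tt ε n) ^ 2 * v) ^ n :=
    pow_le_pow_left₀ (integral_nonneg (fun ω => (Real.exp_pos _).le)) hmgf2 n
  have hfin : (μ {ω | ε * n ≤ ∑ i ∈ Finset.range n, g (X (i, j) ω)}).toReal
      ≤ Real.exp (100 * v / ε ^ 2) / (n : ℝ) ^ 5 := by
    refine hch.trans (le_trans ?_ (chernoff_numeric hε hv hn))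
    rw [Real.exp_add]
    refine mul_le_mul_of_nonneg_left ?_ (Real.exp_pos _).le
    rw [show (n : ℝ) * ((tt ε n) ^ 2 * v) = (n : ℕ) * ((tt ε n) ^ 2 * v) by norm_num,
      Real.exp_nat_mul]
    exact hpow
  calc μ {ω | ε * n ≤ ∑ i ∈ Finset.range n, g (X (i, j) ω)}
      = ENNReal.ofReal ((μ {ω | ε * n ≤ ∑ i ∈ Finset.range n, g (X (i, j) ω)}).toReal) := by
        rw [ENNReal.ofReal_toReal (measure_ne_top _ _)]
  _ ≤ ENNReal.ofReal (Real.exp (100 * v / ε ^ 2) / (n : ℝ) ^ 5) := ENNReal.ofReal_le_ofReal hfin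

end events

section bigevents
variable {Ω : Type} [MeasurableSpace Ω] {μ : Measure Ω} [IsProbabilityMeasure μ]
variable {X : ℕ × ℕ → Ω → ℝ}
variable (hmeas : ∀ ij, Measurable (X ij))
variable (hindep : iIndepFun X μ)
variable (hident : ∀ ij, IdentDistrib (X ij) (X (0, 0)) μ μ)
variable (hsq : Integrable (fun ω => (X (0, 0) ω) ^ 2) μ)

include hmeas hindep hident hsq in
lemma S1_tsum {ε : ℝ} (hε : 0 < ε) :
    (∑' n, μ (⋃ j ∈ Finset.range n,
      ({ω | ε * n ≤ ∑ i ∈ Finset.range n, gg μ X ε n (X (i, j) ω)} ∪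
       {ω | ε * n ≤ ∑ i ∈ Finset.range n, -gg μ X ε n (X (i, j) ω)}))) ≠ ⊤ := by
  set v : ℝ := ∫ ω, (X (0, 0) ω) ^ 2 ∂μ with hvdef
  have hv : 0 ≤ v := integral_nonneg (fun ω => sq_nonneg _)
  set K : ℝ := Real.exp (100 * v / ε ^ 2) with hKdef
  have hK : 0 ≤ K := (Real.exp_pos _).le
  refine tsum_meas_ne_top μ _ (fun n => 2 * K * (1 / (n : ℝ) ^ 4)) 3
    (((Real.summable_one_div_nat_pow.2 (by norm_num)).mul_left (2 * K))) (fun n hn => ?_)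
  have hn0 : (0:ℝ) < n := by exact_mod_cast Nat.lt_of_lt_of_le (by norm_num) hn
  have hpos := chern_one hmeas hindep hident hε hn hv (gg μ X ε n)
    (gg_meas hmeas hε hn) (fun x => gg_abs_le hmeas hε hn x)
    (gg_mean hmeas hε hn) (gg_sq_le hmeas hsq hε hn)
  have hneg : ∀ j, μ {ω | ε * n ≤ ∑ i ∈ Finset.range n, -gg μ X ε n (X (i, j) ω)}
      ≤ ENNReal.ofReal (K / (n : ℝ) ^ 5) := by
    intro j
    have h := chern_one hmeas hindep hident hε hn hv (fun x => -gg μ X ε n x)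
      ((gg_meas hmeas hε hn).neg) (fun x => by rw [abs_neg]; exact gg_abs_le hmeas hε hn x)
      (by rw [integral_neg, gg_mean hmeas hε hn, neg_zero])
      (by simpa [neg_sq] using gg_sq_le hmeas hsq hε hn) j
    exact h
  calc μ (⋃ j ∈ Finset.range n,
      ({ω | ε * n ≤ ∑ i ∈ Finset.range n, gg μ X ε n (X (i, j) ω)} ∪
       {ω | ε * n ≤ ∑ i ∈ Finset.range n, -gg μ X ε n (X (i, j) ω)}))
      ≤ ∑ j ∈ Finset.range n, μ
        ({ω | ε * n ≤ ∑ i ∈ Finset.range n, gg μ X ε n (X (i, j) ω)} ∪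
         {ω | ε * n ≤ ∑ i ∈ Finset.range n, -gg μ X ε n (X (i, j) ω)}) :=
      measure_biUnion_finset_le _ _
  _ ≤ ∑ _j ∈ Finset.range n, (ENNReal.ofReal (K / (n : ℝ) ^ 5) + ENNReal.ofReal (K / (n : ℝ) ^ 5)) := by
      refine Finset.sum_le_sum (fun j _ => ?_)
      exact (measure_union_le _ _).trans (add_le_add (hpos j) (hneg j))
  _ = (n : ℝ≥0∞) * (ENNReal.ofReal (K / (n : ℝ) ^ 5) + ENNReal.ofReal (K / (n : ℝ) ^ 5)) := by
      rw [Finset.sum_const, Finset.card_range, nsmul_eq_mul]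
  _ ≤ ENNReal.ofReal (2 * K * (1 / (n : ℝ) ^ 4)) := by
      rw [← ENNReal.ofReal_add (by positivity) (by positivity),
        ← ENNReal.ofReal_natCast n, ← ENNReal.ofReal_mul (by positivity)]
      refine ENNReal.ofReal_le_ofReal (le_of_eq ?_)
      have : ((n:ℝ)) ^ 5 = (n:ℝ) ^ 4 * n := by ring
      field_simp [this]
      ring

lemma numeric2 {ε v : ℝ} (hε : 0 < ε) (hv : 0 ≤ v) {n : ℕ} (hn : 3 ≤ n) :
    (n : ℝ) * (n : ℝ) ^ 3 * (v / (BB ε n) ^ 2) ^ 3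
      ≤ (10 ^ 6 * 8 ^ 6 * v ^ 3 / ε ^ 6) * (((n : ℝ) ^ ((5:ℝ)/4))⁻¹) := by
  have hn0 : (0:ℝ) < n := by exact_mod_cast Nat.lt_of_lt_of_le (by norm_num) hn
  have hL := log_pos' hn
  set L : ℝ := Real.log n with hLdef
  have e1 : (n : ℝ) * (n : ℝ) ^ 3 * (v / (BB ε n) ^ 2) ^ 3
      = 10 ^ 6 * v ^ 3 * L ^ 6 / (ε ^ 6 * (n:ℝ) ^ 2) := by
    unfold BB
    rw [← hLdef]
    field_simp
  have hL6 : L ^ 6 ≤ 8 ^ 6 * (n : ℝ) ^ ((3:ℝ)/4) := by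
    have h8 := log_le_eight_rpow (n := n) (le_trans (by norm_num) hn)
    have h2 : L ^ 6 ≤ (8 * (n : ℝ) ^ ((8:ℝ)⁻¹)) ^ 6 := pow_le_pow_left₀ hL.le h8 6
    calc L ^ 6 ≤ (8 * (n : ℝ) ^ ((8:ℝ)⁻¹)) ^ 6 := h2
    _ = 8 ^ 6 * ((n : ℝ) ^ ((8:ℝ)⁻¹)) ^ 6 := by rw [mul_pow]
    _ = 8 ^ 6 * (n : ℝ) ^ ((3:ℝ)/4) := by
        rw [← Real.rpow_natCast ((n : ℝ) ^ ((8:ℝ)⁻¹)) 6, ← Real.rpow_mul hn0.le]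
        norm_num
  have hsplit : (n : ℝ) ^ ((3:ℝ)/4) * (n : ℝ) ^ ((5:ℝ)/4) = (n:ℝ) ^ 2 := by
    rw [← Real.rpow_add hn0]
    norm_num [Real.rpow_two]
  have key : L ^ 6 / (n:ℝ) ^ 2 ≤ 8 ^ 6 / ((n : ℝ) ^ ((5:ℝ)/4)) := by
    rw [div_le_div_iff₀ (by positivity) (by positivity)]
    calc L ^ 6 * (n : ℝ) ^ ((5:ℝ)/4) ≤ (8 ^ 6 * (n : ℝ) ^ ((3:ℝ)/4)) * (n : ℝ) ^ ((5:ℝ)/4) :=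
        mul_le_mul_of_nonneg_right hL6 (Real.rpow_nonneg hn0.le _)
    _ = 8 ^ 6 * (n:ℝ) ^ 2 := by rw [mul_assoc, hsplit]
  calc (n : ℝ) * (n : ℝ) ^ 3 * (v / (BB ε n) ^ 2) ^ 3
      = (10 ^ 6 * v ^ 3 / ε ^ 6) * (L ^ 6 / (n:ℝ) ^ 2) := by rw [e1]; ring
  _ ≤ (10 ^ 6 * v ^ 3 / ε ^ 6) * (8 ^ 6 / ((n : ℝ) ^ ((5:ℝ)/4))) :=
      mul_le_mul_of_nonneg_left key (by positivity)
  _ = (10 ^ 6 * 8 ^ 6 * v ^ 3 / ε ^ 6) * (((n : ℝ) ^ ((5:ℝ)/4))⁻¹) := by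
      rw [div_eq_mul_inv]
      ring

include hmeas hindep hident hsq in
lemma S2_tsum {ε : ℝ} (hε : 0 < ε) :
    (∑' n, μ (⋃ j ∈ Finset.range n, ⋃ s ∈ Finset.powersetCard 3 (Finset.range n),
      ⋂ i ∈ s, X (i, j) ⁻¹' {x : ℝ | BB ε n < |x|})) ≠ ⊤ := by
  set v : ℝ := ∫ ω, (X (0, 0) ω) ^ 2 ∂μ with hvdef
  have hv : 0 ≤ v := integral_nonneg (fun ω => sq_nonneg _)
  refine tsum_meas_ne_top μ _
    (fun n => (10 ^ 6 * 8 ^ 6 * v ^ 3 / ε ^ 6) * (((n : ℝ) ^ ((5:ℝ)/4))⁻¹)) 3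
    ((Real.summable_nat_rpow_inv.2 (by norm_num)).mul_left _) (fun n hn => ?_)
  have hn0 : (0:ℝ) < n := by exact_mod_cast Nat.lt_of_lt_of_le (by norm_num) hn
  have hB := BB_pos hε hn
  set A : Set ℝ := {x : ℝ | BB ε n < |x|} with hAdef
  have hA : MeasurableSet A := measurableSet_lt measurable_const continuous_abs.measurable
  have hqt : (μ (X (0, 0) ⁻¹' A)).toReal ≤ v / (BB ε n) ^ 2 := markov_abs μ hsq hB
  have hqb : μ (X (0, 0) ⁻¹' A) ≤ ENNReal.ofReal (v / (BB ε n) ^ 2) := by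
    rw [← ENNReal.ofReal_toReal (measure_ne_top μ _)]
    exact ENNReal.ofReal_le_ofReal hqt
  have hinter : ∀ j : ℕ, ∀ s ∈ Finset.powersetCard 3 (Finset.range n),
      μ (⋂ i ∈ s, X (i, j) ⁻¹' A) ≤ ENNReal.ofReal ((v / (BB ε n) ^ 2) ^ 3) := by
    intro j s hs
    obtain ⟨hsub, hcard⟩ := Finset.mem_powersetCard.1 hs
    rw [meas_inter_col μ X hindep s j A hA]
    have : ∀ i ∈ s, μ (X (i, j) ⁻¹' A) = μ (X (0, 0) ⁻¹' A) := fun i _ =>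
      (hident (i, j)).measure_mem_eq hA
    rw [Finset.prod_congr rfl this, Finset.prod_const, hcard,
      ENNReal.ofReal_pow (by positivity)]
    exact pow_le_pow_left' hqb 3
  calc μ (⋃ j ∈ Finset.range n, ⋃ s ∈ Finset.powersetCard 3 (Finset.range n),
        ⋂ i ∈ s, X (i, j) ⁻¹' A)
      ≤ ∑ j ∈ Finset.range n, μ (⋃ s ∈ Finset.powersetCard 3 (Finset.range n),
        ⋂ i ∈ s, X (i, j) ⁻¹' A) := measure_biUnion_finset_le _ _
  _ ≤ ∑ _j ∈ Finset.range n, ∑ _s ∈ Finset.powersetCard 3 (Finset.range n),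
        ENNReal.ofReal ((v / (BB ε n) ^ 2) ^ 3) := by
      refine Finset.sum_le_sum (fun j _ => ?_)
      exact (measure_biUnion_finset_le _ _).trans
        (Finset.sum_le_sum (fun s hs => hinter j s hs))
  _ = (n : ℝ≥0∞) * (((Finset.range n).card.choose 3 : ℝ≥0∞)
        * ENNReal.ofReal ((v / (BB ε n) ^ 2) ^ 3)) := by
      rw [Finset.sum_const, Finset.sum_const, Finset.card_range, Finset.card_powersetCard,
        Finset.card_range, nsmul_eq_mul, nsmul_eq_mul]
  _ ≤ ENNReal.ofReal ((10 ^ 6 * 8 ^ 6 * v ^ 3 / ε ^ 6) * (((n : ℝ) ^ ((5:ℝ)/4))⁻¹)) := by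
      rw [Finset.card_range]
      have hc : ((n.choose 3 : ℕ) : ℝ≥0∞) ≤ ((n ^ 3 : ℕ) : ℝ≥0∞) := by
        exact_mod_cast Nat.choose_le_pow n 3
      calc (n : ℝ≥0∞) * ((n.choose 3 : ℝ≥0∞) * ENNReal.ofReal ((v / (BB ε n) ^ 2) ^ 3))
          ≤ (n : ℝ≥0∞) * (((n ^ 3 : ℕ) : ℝ≥0∞) * ENNReal.ofReal ((v / (BB ε n) ^ 2) ^ 3)) := by
            gcongr
      _ = ENNReal.ofReal ((n : ℝ) * ((n : ℝ) ^ 3 * (v / (BB ε n) ^ 2) ^ 3)) := by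
            rw [← ENNReal.ofReal_natCast (n ^ 3), ← ENNReal.ofReal_natCast n,
              ← ENNReal.ofReal_mul (by positivity), ← ENNReal.ofReal_mul (by positivity)]
            congr 1
            push_cast
            ring
      _ ≤ ENNReal.ofReal ((10 ^ 6 * 8 ^ 6 * v ^ 3 / ε ^ 6) * (((n : ℝ) ^ ((5:ℝ)/4))⁻¹)) := by
            refine ENNReal.ofReal_le_ofReal ?_
            rw [← mul_assoc]
            exact numeric2 hε hv hn

end bigevents

section s3
variable {Ω : Type} [MeasurableSpace Ω] {μ : Measure Ω} [IsProbabilityMeasure μ]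
variable {X : ℕ × ℕ → Ω → ℝ}

lemma S3_tsum (hmeas : ∀ ij, Measurable (X ij))
    (hident : ∀ ij, IdentDistrib (X ij) (X (0, 0)) μ μ)
    (hsq : Integrable (fun ω => (X (0, 0) ω) ^ 2) μ) {ε : ℝ} (hε : 0 < ε) :
    (∑' k, μ (⋃ p ∈ (Finset.range (k+1) ×ˢ Finset.range (k+1)) \
        (Finset.range k ×ˢ Finset.range k), X p ⁻¹' {x : ℝ | ε * (k + 1) < |x|})) ≠ ⊤ := by
  set A : ℕ → Set Ω := fun k => {ω | ε * (k + 1) < |X (0, 0) ω|} with hAdef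
  have hAmeas : ∀ k, MeasurableSet (A k) :=
    fun k => measurableSet_lt measurable_const (continuous_abs.measurable.comp (hmeas (0, 0)))
  have step1 : ∀ k, μ (⋃ p ∈ (Finset.range (k+1) ×ˢ Finset.range (k+1)) \
      (Finset.range k ×ˢ Finset.range k), X p ⁻¹' {x : ℝ | ε * (k + 1) < |x|})
      ≤ ((2 * k + 1 : ℕ) : ℝ≥0∞) * μ (A k) := by
    intro k
    have hsub : (Finset.range k ×ˢ Finset.range k) ⊆
        (Finset.range (k+1) ×ˢ Finset.range (k+1)) :=
      Finset.product_subset_product (Finset.range_subset_range.2 (Nat.le_succ k))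
        (Finset.range_subset_range.2 (Nat.le_succ k))
    have hcard : ((Finset.range (k+1) ×ˢ Finset.range (k+1)) \
        (Finset.range k ×ˢ Finset.range k)).card = 2 * k + 1 := by
      rw [Finset.card_sdiff_of_subset hsub, Finset.card_product, Finset.card_product, Finset.card_range,
        Finset.card_range]
      have : (k + 1) * (k + 1) = k * k + (2 * k + 1) := by ring
      omega
    calc μ (⋃ p ∈ (Finset.range (k+1) ×ˢ Finset.range (k+1)) \
        (Finset.range k ×ˢ Finset.range k), X p ⁻¹' {x : ℝ | ε * (k + 1) < |x|})
        ≤ ∑ p ∈ (Finset.range (k+1) ×ˢ Finset.range (k+1)) \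
          (Finset.range k ×ˢ Finset.range k), μ (X p ⁻¹' {x : ℝ | ε * (k + 1) < |x|}) :=
        measure_biUnion_finset_le _ _
    _ = ∑ _p ∈ (Finset.range (k+1) ×ˢ Finset.range (k+1)) \
          (Finset.range k ×ˢ Finset.range k), μ (A k) := by
        refine Finset.sum_congr rfl (fun p _ => ?_)
        exact (hident p).measure_mem_eq
          (measurableSet_lt measurable_const continuous_abs.measurable)
    _ = ((2 * k + 1 : ℕ) : ℝ≥0∞) * μ (A k) := by
        rw [Finset.sum_const, hcard, nsmul_eq_mul]
  have step2 : (∑' k, ((2 * k + 1 : ℕ) : ℝ≥0∞) * μ (A k)) ≠ ⊤ := by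
    have hind : ∀ k, ((2 * k + 1 : ℕ) : ℝ≥0∞) * μ (A k)
        = ∫⁻ ω, (A k).indicator (fun _ => ((2 * k + 1 : ℕ) : ℝ≥0∞)) ω ∂μ := by
      intro k
      rw [lintegral_indicator_const (hAmeas k)]
    have htsum : (∑' k, ((2 * k + 1 : ℕ) : ℝ≥0∞) * μ (A k))
        = ∫⁻ ω, ∑' k, (A k).indicator (fun _ => ((2 * k + 1 : ℕ) : ℝ≥0∞)) ω ∂μ := by
      rw [tsum_congr hind]
      exact (lintegral_tsum (fun k => (measurable_const.indicator (hAmeas k)).aemeasurable)).symm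
    rw [htsum]
    have hpt : ∀ ω, (∑' k, (A k).indicator (fun _ => ((2 * k + 1 : ℕ) : ℝ≥0∞)) ω)
        ≤ ENNReal.ofReal ((X (0, 0) ω) ^ 2 / ε ^ 2) := by
      intro ω
      set y : ℝ := |X (0, 0) ω| with hydef
      have hy : 0 ≤ y := abs_nonneg _
      set mfl : ℕ := ⌊y / ε⌋₊ with hmdef
      have hsupp : ∀ k ∉ Finset.range mfl,
          (A k).indicator (fun _ => ((2 * k + 1 : ℕ) : ℝ≥0∞)) ω = 0 := by
        intro k hk
        rw [Finset.mem_range, not_lt] at hk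
        refine Set.indicator_of_notMem (fun hmem => ?_) _
        have h1 : ε * (k + 1) < y := hmem
        have h2 : (k + 1 : ℝ) ≤ y / ε := by
          rw [le_div_iff₀ hε]
          linarith [h1]
        have h3 : k + 1 ≤ mfl := Nat.le_floor (by exact_mod_cast h2)
        omega
      rw [tsum_eq_sum hsupp]
      calc ∑ k ∈ Finset.range mfl, (A k).indicator (fun _ => ((2 * k + 1 : ℕ) : ℝ≥0∞)) ω
          ≤ ∑ k ∈ Finset.range mfl, ((2 * k + 1 : ℕ) : ℝ≥0∞) := by
            refine Finset.sum_le_sum (fun k _ => ?_)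
            by_cases h : ω ∈ A k
            · rw [Set.indicator_of_mem h]
            · rw [Set.indicator_of_notMem h]; exact zero_le
      _ = ((∑ k ∈ Finset.range mfl, (2 * k + 1) : ℕ) : ℝ≥0∞) := by push_cast; rfl
      _ = ((mfl ^ 2 : ℕ) : ℝ≥0∞) := by rw [sum_odds]
      _ ≤ ENNReal.ofReal ((X (0, 0) ω) ^ 2 / ε ^ 2) := by
            have h1 : (mfl : ℝ) ≤ y / ε := Nat.floor_le (by positivity)
            have h2 : ((mfl : ℝ)) ^ 2 ≤ (y / ε) ^ 2 := pow_le_pow_left₀ (by positivity) h1 2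
            have h3 : (y / ε) ^ 2 = (X (0, 0) ω) ^ 2 / ε ^ 2 := by
              rw [div_pow, hydef, sq_abs]
            rw [show ((mfl ^ 2 : ℕ) : ℝ≥0∞) = ENNReal.ofReal ((mfl : ℝ) ^ 2) by
              rw [← ENNReal.ofReal_natCast (mfl ^ 2)]; push_cast; rfl]
            exact ENNReal.ofReal_le_ofReal (by rw [← h3]; exact h2)
    have hle : (∫⁻ ω, ∑' k, (A k).indicator (fun _ => ((2 * k + 1 : ℕ) : ℝ≥0∞)) ω ∂μ)
        ≤ ∫⁻ ω, ENNReal.ofReal ((X (0, 0) ω) ^ 2 / ε ^ 2) ∂μ := lintegral_mono hpt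
    have heq : (∫⁻ ω, ENNReal.ofReal ((X (0, 0) ω) ^ 2 / ε ^ 2) ∂μ)
        = ENNReal.ofReal (∫ ω, (X (0, 0) ω) ^ 2 / ε ^ 2 ∂μ) :=
      (ofReal_integral_eq_lintegral_ofReal (hsq.div_const (ε ^ 2))
        (ae_of_all _ (fun ω => by positivity))).symm
    exact ne_top_of_le_ne_top (by rw [heq]; exact ENNReal.ofReal_ne_top) hle
  exact ne_top_of_le_ne_top step2 (ENNReal.tsum_le_tsum step1)

end s3

section key
variable {Ω : Type} [MeasurableSpace Ω] {μ : Measure Ω} [IsProbabilityMeasure μ]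
variable {X : ℕ × ℕ → Ω → ℝ}

lemma key_aux (hmeas : ∀ ij, Measurable (X ij))
    (hindep : iIndepFun X μ)
    (hident : ∀ ij, IdentDistrib (X ij) (X (0, 0)) μ μ)
    (hint : Integrable (X (0, 0)) μ)
    (hsq : Integrable (fun ω => (X (0, 0) ω) ^ 2) μ)
    {ε : ℝ} (hε : 0 < ε) :
    ∀ᵐ ω ∂μ, ∀ᶠ n : ℕ in atTop, ∀ j, j < n →
      |(n : ℝ)⁻¹ * ∑ i ∈ Finset.range n, X (i, j) ω - ∫ ω', X (0, 0) ω' ∂μ| ≤ 6 * ε := by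
  classical
  set m : ℝ := ∫ ω', X (0, 0) ω' ∂μ with hmdef
  set σ2 : ℝ := ∫ ω, (X (0, 0) ω) ^ 2 ∂μ with hσdef
  have hσ0 : 0 ≤ σ2 := integral_nonneg fun ω => sq_nonneg _
  have hbc1 := ae_eventually_notMem (S1_tsum hmeas hindep hident hsq hε)
  have hbc2 := ae_eventually_notMem (S2_tsum hmeas hindep hident hsq hε)
  have hbc3 := ae_eventually_notMem (S3_tsum hmeas hident hsq hε)
  have hdet : ∀ᶠ n : ℕ in atTop, 3 ≤ n ∧ σ2 / BB ε n ≤ ε := by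
    have hlo := Real.isLittleO_log_id_atTop.def (c := ε ^ 2 / (10 * (σ2 + 1))) (by positivity)
    have hlo2 := tendsto_natCast_atTop_atTop (R := ℝ) |>.eventually hlo
    filter_upwards [hlo2, eventually_ge_atTop 3] with n hn1 hn2
    refine ⟨hn2, ?_⟩
    have hn0 : (0:ℝ) < n := by exact_mod_cast Nat.lt_of_lt_of_le (by norm_num) hn2
    have hL := log_pos' hn2
    have hnorm : Real.log n ≤ ε ^ 2 / (10 * (σ2 + 1)) * n := by
      have h := hn1
      simp only [Real.norm_eq_abs, id_eq] at h
      rwa [abs_of_nonneg hL.le, abs_of_nonneg hn0.le] at h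
    have hBB : σ2 / BB ε n = 10 * σ2 * Real.log n / (ε * n) := by
      unfold BB
      field_simp
    rw [hBB, div_le_iff₀ (by positivity)]
    have h1 : 10 * σ2 * Real.log n ≤ 10 * σ2 * (ε ^ 2 / (10 * (σ2 + 1)) * n) :=
      mul_le_mul_of_nonneg_left hnorm (by positivity)
    have h2 : 10 * σ2 * (ε ^ 2 / (10 * (σ2 + 1)) * n) ≤ ε * (ε * n) := by
      rw [div_mul_eq_mul_div, mul_div_assoc', div_le_iff₀ (by positivity)]
      nlinarith [mul_nonneg (mul_nonneg hε.le hε.le) hn0.le]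
    linarith
  filter_upwards [hbc1, hbc2, hbc3] with ω h1 h2 h3
  obtain ⟨N1, hN1⟩ := eventually_atTop.1 h1
  obtain ⟨N2, hN2⟩ := eventually_atTop.1 h2
  obtain ⟨K, hK⟩ := eventually_atTop.1 h3
  set C : ℝ := ∑ p ∈ Finset.range K ×ˢ Finset.range K, |X p ω| with hCdef
  have hC0 : 0 ≤ C := Finset.sum_nonneg fun p _ => abs_nonneg _
  have hhuge : ∀ i j : ℕ, K ≤ max i j → |X (i, j) ω| ≤ ε * (max i j + 1) := by
    intro i j hij
    by_contra hlt
    push_neg at hlt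
    refine hK (max i j) hij (Set.mem_iUnion₂.2 ⟨(i, j), ?_, ?_⟩)
    · rw [Finset.mem_sdiff, Finset.mem_product, Finset.mem_product, Finset.mem_range,
        Finset.mem_range, Finset.mem_range, Finset.mem_range]
      constructor
      · exact ⟨Nat.lt_succ_of_le (le_max_left _ _), Nat.lt_succ_of_le (le_max_right _ _)⟩
      · intro hcon
        rcases hcon with ⟨hi, hj⟩
        simp only at hi hj
        omega
    · exact hlt
  have hCn : ∀ᶠ n : ℕ in atTop, C ≤ ε * n := by
    filter_upwards [(tendsto_natCast_atTop_atTop (R := ℝ)).eventually_ge_atTop (C / ε)] with n hn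
    calc C = C / ε * ε := by field_simp
    _ ≤ (n : ℝ) * ε := mul_le_mul_of_nonneg_right hn hε.le
    _ = ε * n := mul_comm _ _
  filter_upwards [eventually_ge_atTop (max (max N1 N2) K), hdet, hCn] with n hn hdet' hCn'
  obtain ⟨hn3, htail⟩ := hdet'
  have hnN1 : N1 ≤ n := le_trans (le_trans (le_max_left _ _) (le_max_left _ _)) hn
  have hnN2 : N2 ≤ n := le_trans (le_trans (le_max_right _ _) (le_max_left _ _)) hn
  have hnK : K ≤ n := le_trans (le_max_right _ _) hn
  intro j hj
  have hn0 : (0:ℝ) < n := by exact_mod_cast Nat.lt_of_lt_of_le (by norm_num) hn3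
  -- (a) Chernoff part
  have hS1 := hN1 n hnN1
  have hgbound : |∑ i ∈ Finset.range n, gg μ X ε n (X (i, j) ω)| ≤ ε * n := by
    rw [abs_le]
    constructor
    · by_contra hcon
      push_neg at hcon
      refine hS1 (Set.mem_iUnion₂.2 ⟨j, Finset.mem_range.2 hj, Or.inr ?_⟩)
      show ε * n ≤ ∑ i ∈ Finset.range n, -gg μ X ε n (X (i, j) ω)
      rw [Finset.sum_neg_distrib]
      linarith
    · by_contra hcon
      push_neg at hcon
      exact hS1 (Set.mem_iUnion₂.2 ⟨j, Finset.mem_range.2 hj, Or.inl (le_of_lt hcon)⟩)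
  -- (b) number of large entries
  set T : Finset ℕ := (Finset.range n).filter (fun i => BB ε n < |X (i, j) ω|) with hTdef
  have hTcard : T.card ≤ 2 := by
    by_contra hcon
    push_neg at hcon
    obtain ⟨s, hsub, hcard⟩ := Finset.exists_subset_card_eq (show 3 ≤ T.card from hcon)
    refine hN2 n hnN2 (Set.mem_iUnion₂.2 ⟨j, Finset.mem_range.2 hj, ?_⟩)
    refine Set.mem_iUnion₂.2 ⟨s, Finset.mem_powersetCard.2
      ⟨hsub.trans (Finset.filter_subset _ _), hcard⟩, ?_⟩
    exact Set.mem_iInter₂.2 fun i hi => (Finset.mem_filter.1 (hsub hi)).2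
  -- tail sum bound
  have htail_eq : ∀ i, |X (i, j) ω - tr ε n (X (i, j) ω)|
      = if BB ε n < |X (i, j) ω| then |X (i, j) ω| else 0 := by
    intro i
    unfold tr
    rcases le_or_gt (|X (i, j) ω|) (BB ε n) with h | h
    · rw [if_pos h, if_neg (not_lt.2 h), sub_self, abs_zero]
    · rw [if_neg (not_le.2 h), if_pos h, sub_zero]
  have hsum_tail : ∑ i ∈ Finset.range n, |X (i, j) ω - tr ε n (X (i, j) ω)|
      = ∑ i ∈ T, |X (i, j) ω| := by
    rw [hTdef, Finset.sum_filter]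
    exact Finset.sum_congr rfl fun i _ => htail_eq i
  have hterm : ∀ i ∈ T, |X (i, j) ω| ≤ ε * n + C := by
    intro i hi
    have hi' := Finset.mem_filter.1 hi
    have hin : i < n := Finset.mem_range.1 hi'.1
    rcases le_or_gt K (max i j) with hK' | hK'
    · have hh := hhuge i j hK'
      have hmaxn : max i j < n := max_lt hin hj
      have hmax : ((max i j : ℕ) : ℝ) + 1 ≤ n := by
        have : (max i j) + 1 ≤ n := hmaxn
        exact_mod_cast this
      calc |X (i, j) ω| ≤ ε * (max i j + 1) := hh
      _ ≤ ε * n := mul_le_mul_of_nonneg_left hmax hε.le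
      _ ≤ ε * n + C := le_add_of_nonneg_right hC0
    · have hiK : i < K := lt_of_le_of_lt (le_max_left i j) hK'
      have hjK : j < K := lt_of_le_of_lt (le_max_right i j) hK'
      have hmem : (i, j) ∈ Finset.range K ×ˢ Finset.range K :=
        Finset.mk_mem_product (Finset.mem_range.2 hiK) (Finset.mem_range.2 hjK)
      have hle : |X (i, j) ω| ≤ C :=
        Finset.single_le_sum (f := fun p => |X p ω|) (fun p _ => abs_nonneg _) hmem
      nlinarith [mul_nonneg hε.le hn0.le]
  have hStail : |∑ i ∈ Finset.range n, (X (i, j) ω - tr ε n (X (i, j) ω))| ≤ 2 * (ε * n + C) := by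
    calc |∑ i ∈ Finset.range n, (X (i, j) ω - tr ε n (X (i, j) ω))|
        ≤ ∑ i ∈ Finset.range n, |X (i, j) ω - tr ε n (X (i, j) ω)| :=
        Finset.abs_sum_le_sum_abs _ _
    _ = ∑ i ∈ T, |X (i, j) ω| := hsum_tail
    _ ≤ ∑ _i ∈ T, (ε * n + C) := Finset.sum_le_sum hterm
    _ = T.card * (ε * n + C) := by rw [Finset.sum_const, nsmul_eq_mul]
    _ ≤ 2 * (ε * n + C) := by
        have h2 : (T.card : ℝ) ≤ 2 := by exact_mod_cast hTcard
        have hpos : (0:ℝ) ≤ ε * n + C := by positivity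
        exact mul_le_mul_of_nonneg_right h2 hpos
  -- (d) mean part
  have hcc : |cc μ X ε n - m| ≤ ε := by
    have hitr := integrable_tr (μ := μ) hmeas hε hn3
    have heq : m - cc μ X ε n = ∫ ω', (X (0, 0) ω' - tr ε n (X (0, 0) ω')) ∂μ := by
      rw [integral_sub hint hitr, ← hmdef]
      rfl
    have habs : |m - cc μ X ε n| ≤ σ2 / BB ε n := by
      rw [heq]
      calc |∫ ω', (X (0, 0) ω' - tr ε n (X (0, 0) ω')) ∂μ|
          ≤ ∫ ω', |X (0, 0) ω' - tr ε n (X (0, 0) ω')| ∂μ := by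
            simpa [Real.norm_eq_abs] using norm_integral_le_integral_norm
              (μ := μ) (fun ω' => X (0, 0) ω' - tr ε n (X (0, 0) ω'))
      _ ≤ ∫ ω', (X (0, 0) ω') ^ 2 / BB ε n ∂μ :=
          integral_mono (hint.sub hitr).abs (hsq.div_const _)
            (fun ω' => tail_abs_le hε hn3 _)
      _ = σ2 / BB ε n := integral_div _ _
    calc |cc μ X ε n - m| = |m - cc μ X ε n| := abs_sub_comm _ _
    _ ≤ σ2 / BB ε n := habs
    _ ≤ ε := htail
  -- decomposition
  have hdec : ∑ i ∈ Finset.range n, X (i, j) ω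
      = (∑ i ∈ Finset.range n, gg μ X ε n (X (i, j) ω))
        + (∑ i ∈ Finset.range n, (X (i, j) ω - tr ε n (X (i, j) ω))) + n * cc μ X ε n := by
    have hpt : ∀ i : ℕ, X (i, j) ω = gg μ X ε n (X (i, j) ω)
        + (X (i, j) ω - tr ε n (X (i, j) ω)) + cc μ X ε n := by
      intro i; unfold gg; ring
    calc ∑ i ∈ Finset.range n, X (i, j) ω
        = ∑ i ∈ Finset.range n, (gg μ X ε n (X (i, j) ω)
          + (X (i, j) ω - tr ε n (X (i, j) ω)) + cc μ X ε n) :=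
        Finset.sum_congr rfl fun i _ => hpt i
    _ = (∑ i ∈ Finset.range n, gg μ X ε n (X (i, j) ω))
        + (∑ i ∈ Finset.range n, (X (i, j) ω - tr ε n (X (i, j) ω))) + n * cc μ X ε n := by
        rw [Finset.sum_add_distrib, Finset.sum_add_distrib, Finset.sum_const,
          Finset.card_range, nsmul_eq_mul]
  have hfinal : (n : ℝ)⁻¹ * ∑ i ∈ Finset.range n, X (i, j) ω - m
      = (n : ℝ)⁻¹ * ((∑ i ∈ Finset.range n, gg μ X ε n (X (i, j) ω))
        + (∑ i ∈ Finset.range n, (X (i, j) ω - tr ε n (X (i, j) ω)))) + (cc μ X ε n - m) := by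
    rw [hdec]
    field_simp
    ring
  rw [hfinal]
  have h5 : |∑ i ∈ Finset.range n, gg μ X ε n (X (i, j) ω)|
      + |∑ i ∈ Finset.range n, (X (i, j) ω - tr ε n (X (i, j) ω))| ≤ 5 * (ε * n) := by
    have := hCn'
    linarith
  calc |(n : ℝ)⁻¹ * ((∑ i ∈ Finset.range n, gg μ X ε n (X (i, j) ω))
        + (∑ i ∈ Finset.range n, (X (i, j) ω - tr ε n (X (i, j) ω)))) + (cc μ X ε n - m)|
      ≤ |(n : ℝ)⁻¹ * ((∑ i ∈ Finset.range n, gg μ X ε n (X (i, j) ω))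
        + (∑ i ∈ Finset.range n, (X (i, j) ω - tr ε n (X (i, j) ω))))| + |cc μ X ε n - m| :=
      abs_add_le _ _
  _ ≤ (n : ℝ)⁻¹ * (|∑ i ∈ Finset.range n, gg μ X ε n (X (i, j) ω)|
        + |∑ i ∈ Finset.range n, (X (i, j) ω - tr ε n (X (i, j) ω))|) + ε := by
      refine add_le_add ?_ hcc
      rw [abs_mul, abs_of_nonneg (by positivity : (0:ℝ) ≤ (n:ℝ)⁻¹)]
      exact mul_le_mul_of_nonneg_left (abs_add_le _ _) (by positivity)
  _ ≤ (n : ℝ)⁻¹ * (5 * (ε * n)) + ε := by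
      refine add_le_add (mul_le_mul_of_nonneg_left h5 (by positivity)) le_rfl
  _ = 6 * ε := by field_simp; ring

end key

end Statement6Aux

/-- **Uniform strong law for column means of an i.i.d. double array** (STATEMENT 6).
If `X i j`, `i, j ∈ ℕ`, are i.i.d. real random variables with `E X₁₁² < ∞`, then
`max_{1 ≤ j ≤ n} |X̄_j − E X₁₁| → 0` almost surely, where
`X̄_j = n⁻¹ ∑_{i<n} X i j`. -/
theorem statement6
    {Ω : Type} [MeasurableSpace Ω] (μ : Measure Ω) [IsProbabilityMeasure μ]
    (X : ℕ × ℕ → Ω → ℝ) (hmeas : ∀ ij, Measurable (X ij))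
    (hindep : iIndepFun X μ)
    (hident : ∀ ij, IdentDistrib (X ij) (X (0, 0)) μ μ)
    (hint : Integrable (X (0, 0)) μ)
    (hsq : Integrable (fun ω => (X (0, 0) ω) ^ 2) μ) :
    ∀ᵐ ω ∂μ, Tendsto
      (fun n => ⨆ j : Fin n,
        |(n : ℝ)⁻¹ * ∑ i : Fin n, X (i.1, j.1) ω - ∫ ω', X (0, 0) ω' ∂μ|)
      atTop (nhds 0) := by
  have key : ∀ k : ℕ, ∀ᵐ ω ∂μ, ∀ᶠ n : ℕ in atTop, ∀ j, j < n →
      |(n : ℝ)⁻¹ * ∑ i ∈ Finset.range n, X (i, j) ω - ∫ ω', X (0, 0) ω' ∂μ|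
        ≤ 6 * (1 / (k + 1)) :=
    fun k => Statement6Aux.key_aux hmeas hindep hident hint hsq (by positivity)
  rw [← MeasureTheory.ae_all_iff] at key
  filter_upwards [key] with ω hω
  rw [NormedAddCommGroup.tendsto_nhds_zero]
  intro e he
  obtain ⟨k, hk⟩ := exists_nat_one_div_lt (show (0:ℝ) < e / 6 by linarith)
  filter_upwards [hω k] with n hn
  have hnonneg : 0 ≤ ⨆ j : Fin n,
      |(n : ℝ)⁻¹ * ∑ i : Fin n, X (i.1, j.1) ω - ∫ ω', X (0, 0) ω' ∂μ| :=
    Real.iSup_nonneg (fun j => abs_nonneg _)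
  rw [Real.norm_eq_abs, abs_of_nonneg hnonneg]
  have hsup : (⨆ j : Fin n,
      |(n : ℝ)⁻¹ * ∑ i : Fin n, X (i.1, j.1) ω - ∫ ω', X (0, 0) ω' ∂μ|)
      ≤ 6 * (1 / (k + 1)) := by
    refine Real.iSup_le (fun j => ?_) (by positivity)
    have hj := hn j.1 j.2
    rwa [← Fin.sum_univ_eq_sum_range (fun i => X (i, j.1) ω) n] at hj
  calc (⨆ j : Fin n,
      |(n : ℝ)⁻¹ * ∑ i : Fin n, X (i.1, j.1) ω - ∫ ω', X (0, 0) ω' ∂μ|)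
      ≤ 6 * (1 / (k + 1)) := hsup
  _ < 6 * (e / 6) := by
      refine mul_lt_mul_of_pos_left ?_ (by norm_num)
      exact hk
  _ = e := by ring


end
end

section
/- Let τ ∈ (0,1], let f_τ be the Marčenko–Pastur density with parameter τ, and let γ > 0. Then ∫ (1+γx)^{-2} f_τ(x) dx / ∫ (1+γx)^{-1} f_τ(x) dx > ∫ x(1+γx)^{-2} f_τ(x) dx / ∫ x(1+γx)^{-1} f_τ(x) dx; equivalently, with f₁ = h_{2,1}, f₂ = h_{2,0}, g₁ = h_{1,1}, g₂ = h_{1,0}, one has f₂(γ)/g₂(γ) − f₁(γ)/g₁(γ) > 0, so that the limiting derivative Δ'_∞(γ*) = −(σ²_{ε0}/γ*){f₂(γ*)/g₂(γ*) − f₁(γ*)/g₁(γ*)} is strictly negative for any γ* > 0 and σ²_{ε0} > 0. -/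
open MeasureTheory Filter

noncomputable section

/-- Marčenko–Pastur density with parameter `τ`. -/
def mpDensity (τ x : ℝ) : ℝ :=
  if (1 - Real.sqrt τ) ^ 2 ≤ x ∧ x ≤ (1 + Real.sqrt τ) ^ 2 then
    Real.sqrt (((1 + Real.sqrt τ) ^ 2 - x) * (x - (1 - Real.sqrt τ) ^ 2)) / (2 * Real.pi * τ * x)
  else 0

/-- `h_{k,l}(γ) = ∫ x^l (1+γx)^{-k} f_τ(x) dx`. -/
def hkl (τ : ℝ) (k l : ℕ) (γ : ℝ) : ℝ :=
  ∫ x : ℝ, x ^ l / (1 + γ * x) ^ k * mpDensity τ x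

namespace MPaux

variable (τ : ℝ)

def aa : ℝ := (1 - Real.sqrt τ) ^ 2
def bb : ℝ := (1 + Real.sqrt τ) ^ 2
def F (x : ℝ) : ℝ := Real.sqrt ((bb τ - x) * (x - aa τ)) / (2 * Real.pi * τ * x)

variable {τ}

lemma ha0 : 0 ≤ aa τ := sq_nonneg _

lemma hab (hτ : 0 < τ) : aa τ < bb τ := by
  have hs : 0 < Real.sqrt τ := Real.sqrt_pos.mpr hτ
  unfold aa bb; nlinarith

lemma mp_indicator : mpDensity τ = (Set.Icc (aa τ) (bb τ)).indicator (F τ) := by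
  funext x
  simp [mpDensity, Set.indicator_apply, Set.mem_Icc, aa, bb, F]

lemma mp_meas : Measurable (mpDensity τ) := by
  rw [mp_indicator]
  apply Measurable.indicator _ measurableSet_Icc
  unfold F
  fun_prop

lemma mp_nonneg (hτ : 0 < τ) (x : ℝ) : 0 ≤ mpDensity τ x := by
  rw [mp_indicator, Set.indicator_apply]
  split_ifs with h
  · rcases h with ⟨h1, h2⟩
    have hx : 0 ≤ x := le_trans ha0 h1
    unfold F
    apply div_nonneg (Real.sqrt_nonneg _)
    positivity
  · exact le_refl _

lemma mp_supp {x : ℝ} (h : mpDensity τ x ≠ 0) : aa τ ≤ x ∧ x ≤ bb τ := by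
  by_contra hc
  rw [mp_indicator, Set.indicator_apply] at h
  simp only [Set.mem_Icc] at h
  exact h (if_neg hc ▸ rfl)

lemma mp_pos (hτ : 0 < τ) {x : ℝ} (hx : x ∈ Set.Ioo (aa τ) (bb τ)) :
    0 < mpDensity τ x := by
  obtain ⟨h1, h2⟩ := hx
  have hx0 : 0 < x := lt_of_le_of_lt ha0 h1
  rw [mp_indicator, Set.indicator_of_mem (Set.mem_Icc.mpr ⟨le_of_lt h1, le_of_lt h2⟩)]
  unfold F
  apply div_pos
  · exact Real.sqrt_pos.mpr (mul_pos (by linarith) (by linarith))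
  · have := Real.pi_pos; positivity

lemma mp_integrable (hτ : 0 < τ) : Integrable (mpDensity τ) := by
  have hπ := Real.pi_pos
  rw [mp_indicator, integrable_indicator_iff measurableSet_Icc]
  set C := Real.sqrt (bb τ) / (2 * Real.pi * τ) with hC
  have hC0 : 0 ≤ C := by positivity
  have hb0 : (0:ℝ) ≤ bb τ := le_trans ha0 (le_of_lt (hab hτ))
  have hdom : IntegrableOn (fun x => C * x ^ (-1/2 : ℝ)) (Set.Icc (aa τ) (bb τ)) := by
    apply IntegrableOn.mono_set (t := Set.Icc 0 (bb τ))
    · rw [integrableOn_Icc_iff_integrableOn_Ioc]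
      exact (intervalIntegrable_iff_integrableOn_Ioc_of_le hb0).mp
        ((intervalIntegral.intervalIntegrable_rpow' (by norm_num)).const_mul C)
    · exact Set.Icc_subset_Icc_left ha0
  refine Integrable.mono hdom ?_ ?_
  · exact (Measurable.div (by fun_prop) (by fun_prop)).aestronglyMeasurable
  · rw [ae_restrict_iff' measurableSet_Icc]
    filter_upwards with x hx
    rcases hx with ⟨h1, h2⟩
    have hx0 : (0:ℝ) ≤ x := le_trans ha0 h1
    rcases eq_or_lt_of_le hx0 with h0 | h0
    · have hF0 : F τ x = 0 := by
        unfold F; rw [← h0]; simp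
      rw [hF0, norm_zero]; exact norm_nonneg _
    · have hFx : 0 ≤ F τ x := by
        unfold F; apply div_nonneg (Real.sqrt_nonneg _); positivity
      have hsx : 0 < Real.sqrt x := Real.sqrt_pos.mpr h0
      have hxx : Real.sqrt x * Real.sqrt x = x := Real.mul_self_sqrt hx0
      have ha : (0:ℝ) ≤ aa τ := ha0
      have hsq : Real.sqrt ((bb τ - x) * (x - aa τ)) ≤ Real.sqrt (bb τ) * Real.sqrt x := by
        rw [← Real.sqrt_mul hb0]
        apply Real.sqrt_le_sqrt
        nlinarith [mul_nonneg hb0 ha, mul_nonneg hx0 (sub_nonneg.mpr h1)]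
      have hrw : x ^ (-1/2 : ℝ) = 1 / Real.sqrt x := by
        rw [show (-1/2 : ℝ) = -(1/2) by norm_num, Real.rpow_neg hx0,
          ← Real.sqrt_eq_rpow, one_div]
      rw [Real.norm_of_nonneg hFx, Real.norm_of_nonneg (by rw [hrw]; positivity), hrw,
        mul_one_div]
      unfold F
      rw [div_le_div_iff₀ (by positivity) hsx]
      have hCeq : C * (2 * Real.pi * τ) = Real.sqrt (bb τ) := by
        rw [hC]; field_simp
      have hCx : C * (2 * Real.pi * τ * x) = Real.sqrt (bb τ) * x := by
        rw [← hCeq]; ring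
      have hfin : Real.sqrt (bb τ) * Real.sqrt x * Real.sqrt x = Real.sqrt (bb τ) * x := by
        rw [mul_assoc, hxx]
      rw [hCx]
      calc Real.sqrt ((bb τ - x) * (x - aa τ)) * Real.sqrt x
          ≤ Real.sqrt (bb τ) * Real.sqrt x * Real.sqrt x :=
            mul_le_mul_of_nonneg_right hsq (le_of_lt hsx)
        _ = Real.sqrt (bb τ) * x := hfin

lemma key (hτ : 0 < τ) (γ : ℝ) (hγ : 0 < γ) :
    hkl τ 2 1 γ / hkl τ 1 1 γ < hkl τ 2 0 γ / hkl τ 1 0 γ := by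
  have hπ := Real.pi_pos
  have ha : (0:ℝ) ≤ aa τ := ha0
  have hab' : aa τ < bb τ := hab hτ
  set f := mpDensity τ with hf
  have hfint : Integrable f := mp_integrable hτ
  have hfmeas : Measurable f := mp_meas
  have hfnn : ∀ x, 0 ≤ f x := mp_nonneg hτ
  set G : ℝ → ℝ := fun x => 1 / (1 + γ * x) with hG
  have hGmeas : Measurable G := by
    apply Measurable.div measurable_const
    fun_prop
  -- bounds on the support
  have hbd : ∀ x : ℝ, f x ≠ 0 → 0 < 1 + γ * x ∧ 0 < G x ∧ G x ≤ 1 := by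
    intro x hx
    obtain ⟨h1, _⟩ := mp_supp hx
    have hx0 : 0 ≤ x := le_trans ha h1
    have hpos : 0 < 1 + γ * x := by positivity
    refine ⟨hpos, by positivity, ?_⟩
    rw [hG]
    rw [div_le_one hpos]
    nlinarith
  -- integrability
  have hGf : Integrable (fun x => G x * f x) := by
    refine Integrable.mono hfint ((hGmeas.mul hfmeas).aestronglyMeasurable) ?_
    filter_upwards with x
    by_cases hx : f x = 0
    · simp [hx]
    · obtain ⟨_, hg0, hg1⟩ := hbd x hx
      rw [norm_mul]
      calc ‖G x‖ * ‖f x‖ ≤ 1 * ‖f x‖ := by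
            apply mul_le_mul_of_nonneg_right _ (norm_nonneg _)
            rw [Real.norm_of_nonneg hg0.le]; exact hg1
        _ = ‖f x‖ := one_mul _
  have hG2f : Integrable (fun x => G x ^ 2 * f x) := by
    refine Integrable.mono hfint (((hGmeas.pow_const 2).mul hfmeas).aestronglyMeasurable) ?_
    filter_upwards with x
    by_cases hx : f x = 0
    · simp [hx]
    · obtain ⟨_, hg0, hg1⟩ := hbd x hx
      rw [norm_mul]
      calc ‖G x ^ 2‖ * ‖f x‖ ≤ 1 * ‖f x‖ := by
            apply mul_le_mul_of_nonneg_right _ (norm_nonneg _)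
            rw [Real.norm_of_nonneg (by positivity)]
            nlinarith
        _ = ‖f x‖ := one_mul _
  set m := ∫ x, f x with hm
  set D := ∫ x, G x * f x with hD
  set A := ∫ x, G x ^ 2 * f x with hA
  -- positivity tool
  have posint : ∀ (u : ℝ → ℝ) (x₀ : ℝ), Integrable u → (∀ x, 0 ≤ u x) →
      (∀ x ∈ Set.Ioo (aa τ) (bb τ), x ≠ x₀ → 0 < u x) → 0 < ∫ x, u x := by
    intro u x₀ hui hunn hupos
    rw [integral_pos_iff_support_of_nonneg hunn hui]
    have hsub : Set.Ioo (aa τ) (bb τ) \ {x₀} ⊆ Function.support u := by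
      rintro x ⟨hx, hxne⟩
      exact (hupos x hx (by simpa using hxne)).ne'
    refine lt_of_lt_of_le ?_ (measure_mono hsub)
    rw [measure_diff_null (measure_singleton x₀), Real.volume_Ioo]
    exact ENNReal.ofReal_pos.mpr (sub_pos.mpr hab')
  have hIoopos : ∀ x ∈ Set.Ioo (aa τ) (bb τ), 0 < x ∧ 0 < 1 + γ * x ∧ 0 < G x ∧ G x < 1 ∧ 0 < f x := by
    intro x hx
    have hx0 : 0 < x := lt_of_le_of_lt ha hx.1
    have h1 : 0 < 1 + γ * x := by positivity
    refine ⟨hx0, h1, by positivity, ?_, mp_pos hτ hx⟩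
    rw [hG, div_lt_one h1]
    nlinarith
  have hm_pos : 0 < m := posint f (aa τ) hfint hfnn
    (fun x hx _ => (hIoopos x hx).2.2.2.2)
  have hD_pos : 0 < D := by
    refine posint _ (aa τ) hGf (fun x => ?_) (fun x hx _ => ?_)
    · by_cases hx : f x = 0
      · simp [hx]
      · exact mul_nonneg (hbd x hx).2.1.le (hfnn x)
    · obtain ⟨_, _, hg, _, hfp⟩ := hIoopos x hx
      exact mul_pos hg hfp
  have hA_pos : 0 < A := by
    refine posint _ (aa τ) hG2f (fun x => ?_) (fun x hx _ => ?_)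
    · exact mul_nonneg (sq_nonneg _) (hfnn x)
    · obtain ⟨_, _, hg, _, hfp⟩ := hIoopos x hx
      exact mul_pos (by positivity) hfp
  -- m - D > 0
  have hmDint : Integrable (fun x => (1 - G x) * f x) := by
    have : (fun x => (1 - G x) * f x) = fun x => f x - G x * f x := by
      funext x; ring
    rw [this]; exact hfint.sub hGf
  have hmDval : ∫ x, (1 - G x) * f x = m - D := by
    have : (fun x => (1 - G x) * f x) = fun x => f x - G x * f x := by
      funext x; ring
    rw [this, integral_sub hfint hGf]
  have hmD_pos : 0 < m - D := by
    rw [← hmDval]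
    refine posint _ (aa τ) hmDint (fun x => ?_) (fun x hx _ => ?_)
    · by_cases hx : f x = 0
      · simp [hx]
      · exact mul_nonneg (by linarith [(hbd x hx).2.2]) (hfnn x)
    · obtain ⟨_, _, _, hg1, hfp⟩ := hIoopos x hx
      exact mul_pos (by linarith) hfp
  -- strict Cauchy-Schwarz via variance
  obtain ⟨c, hc_def⟩ : ∃ c : ℝ, c = D / m := ⟨D / m, rfl⟩
  have hc_pos : 0 < c := hc_def ▸ div_pos hD_pos hm_pos
  have hcm : c * m = D := by rw [hc_def]; exact div_mul_cancel₀ D hm_pos.ne'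
  obtain ⟨x₀, hx₀⟩ : ∃ y : ℝ, y = (1/c - 1)/γ := ⟨_, rfl⟩
  have hVint : Integrable (fun x => (G x - c)^2 * f x) := by
    have : (fun x => (G x - c)^2 * f x)
        = fun x => G x ^ 2 * f x - (2*c) * (G x * f x) + c^2 * f x := by
      funext x; ring
    rw [this]
    exact (hG2f.sub (hGf.const_mul _)).add (hfint.const_mul _)
  have hVval : ∫ x, (G x - c)^2 * f x = A - 2*c*D + c^2*m := by
    have h1 : (fun x => (G x - c)^2 * f x)
        = fun x => G x ^ 2 * f x - (2*c) * (G x * f x) + c^2 * f x := by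
      funext x; ring
    have i1 : Integrable (fun x => G x ^ 2 * f x - 2*c*(G x * f x)) := by
      have := hG2f.sub (hGf.const_mul (2*c))
      exact this
    have i2 : Integrable (fun x => c^2 * f x) := hfint.const_mul _
    rw [h1, integral_add i1 i2, integral_sub hG2f (hGf.const_mul _),
      integral_const_mul, integral_const_mul]
  have hVpos : 0 < A - 2*c*D + c^2*m := by
    rw [← hVval]
    refine posint _ x₀ hVint (fun x => mul_nonneg (sq_nonneg _) (hfnn x))
      (fun x hx hxne => ?_)
    obtain ⟨hx0, h1, _, _, hfp⟩ := hIoopos x hx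
    refine mul_pos ?_ hfp
    have hne : G x ≠ c := by
      intro heq
      apply hxne
      simp only [hG] at heq
      have h2 : c * (1 + γ * x) = 1 := by
        rw [← heq]; field_simp
      have h3 : 1 + γ * x = 1 / c := by
        field_simp
        linear_combination h2
      rw [hx₀, ← h3]
      field_simp
      ring
    have : G x - c ≠ 0 := sub_ne_zero.mpr hne
    positivity
  have hAm : D^2 < A * m := by
    have hexp : m * (A - 2*c*D + c^2*m) = A*m - D^2 := by
      rw [← hcm]; ring
    nlinarith [mul_pos hm_pos hVpos]
  -- express hkl in terms of m, D, A
  have e10 : hkl τ 1 0 γ = D := by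
    rw [hD, hkl]
    congr 1; funext x
    simp [hG]
    exact Or.inl rfl
  have e20 : hkl τ 2 0 γ = A := by
    rw [hA, hkl]
    congr 1; funext x
    simp only [hG, pow_zero, one_div, inv_pow]
    rfl
  have e11 : hkl τ 1 1 γ = (1/γ) * (m - D) := by
    have hpt : ∀ x : ℝ, x ^ 1 / (1 + γ * x) ^ 1 * f x = (1/γ) * (f x - G x * f x) := by
      intro x
      by_cases hx : f x = 0
      · simp [hx]
      · obtain ⟨h1, _, _⟩ := hbd x hx
        simp only [hG, pow_one]
        field_simp
        have h1' : 1 + x * γ ≠ 0 := by rw [mul_comm]; exact h1.ne'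
        rw [eq_sub_iff_add_eq, ← add_div, add_comm (x * γ) 1, div_self h1']
    rw [hkl]
    calc (∫ x, x ^ 1 / (1 + γ * x) ^ 1 * f x)
        = ∫ x, (1/γ) * (f x - G x * f x) := by congr 1; funext x; exact hpt x
      _ = (1/γ) * (m - D) := by
          rw [integral_const_mul, integral_sub hfint hGf]
  have e21 : hkl τ 2 1 γ = (1/γ) * (D - A) := by
    have hpt : ∀ x : ℝ, x ^ 1 / (1 + γ * x) ^ 2 * f x
        = (1/γ) * (G x * f x - G x ^ 2 * f x) := by
      intro x
      by_cases hx : f x = 0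
      · simp [hx]
      · obtain ⟨h1, _, _⟩ := hbd x hx
        simp only [hG, pow_one]
        field_simp
        ring
    rw [hkl]
    calc (∫ x, x ^ 1 / (1 + γ * x) ^ 2 * f x)
        = ∫ x, (1/γ) * (G x * f x - G x ^ 2 * f x) := by congr 1; funext x; exact hpt x
      _ = (1/γ) * (D - A) := by
          rw [integral_const_mul, integral_sub hGf hG2f]
  -- final algebra
  have h11pos : 0 < (1/γ) * (m - D) := by positivity
  rw [e10, e20, e11, e21, div_lt_div_iff₀ h11pos hD_pos]
  have hDA : (D - A) * D < A * (m - D) := by nlinarith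
  calc 1/γ * (D - A) * D = 1/γ * ((D - A) * D) := by ring
    _ < 1/γ * (A * (m - D)) := by
        apply mul_lt_mul_of_pos_left hDA (by positivity)
    _ = A * (1/γ * (m - D)) := by ring

end MPaux

/-- **Strict positivity of `f₂/g₂ − f₁/g₁` and negativity of the limiting
derivative** (STATEMENT 17). For `τ ∈ (0,1]` and `γ > 0`,
`∫(1+γx)⁻²f_τ / ∫(1+γx)⁻¹f_τ > ∫x(1+γx)⁻²f_τ / ∫x(1+γx)⁻¹f_τ`, i.e.
`f₂(γ)/g₂(γ) − f₁(γ)/g₁(γ) > 0`; consequently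
`Δ'_∞(γ*) = −(σ²_{ε0}/γ*)(f₂(γ*)/g₂(γ*) − f₁(γ*)/g₁(γ*)) < 0` for all
`γ* > 0`, `σ²_{ε0} > 0`. -/
theorem statement17 (τ : ℝ) (hτ : 0 < τ) (hτ1 : τ ≤ 1) :
    (∀ γ : ℝ, 0 < γ →
      hkl τ 2 1 γ / hkl τ 1 1 γ < hkl τ 2 0 γ / hkl τ 1 0 γ) ∧
    (∀ γstar σε2 : ℝ, 0 < γstar → 0 < σε2 →
      -(σε2 / γstar) *
        (hkl τ 2 0 γstar / hkl τ 1 0 γstar - hkl τ 2 1 γstar / hkl τ 1 1 γstar) < 0) := by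
  refine ⟨fun γ hγ => MPaux.key hτ γ hγ, fun γstar σε2 hγ hσ => ?_⟩
  have h := MPaux.key (τ := τ) hτ γstar hγ
  exact mul_neg_of_neg_of_pos (neg_lt_zero.mpr (div_pos hσ hγ)) (sub_pos.mpr h)

end
end
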